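/- arXiv:1505.06983 — 4 statements merged into one kernel-verified Lean document; each statement's English description precedes it below -/
import Mathlib

section
/- Let k ≥ 1 be an integer and put d = gcd(12, k). Then Coker [(1_{2k} − X_{2k})·(1_{2k} + X_{2k}^{3} + X_{2k}^{6} + X_{2k}^{9}) 1_{2k} + X_{2k}^{k−6}] ≅ ℤ^{d} if d ∈ {1, 3}; ≅ (ℤ/2ℤ)^{(3d+2)/2} if d ∈ {2, 6}; and ≅ ℤ^{d/2} if d ∈ {4, 12}. -/
open Matrix Polynomial

/-- The `m × m` permutation matrix over `ℤ` of the cyclic permutation `(1,2,…,m)`: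
its `(i,j)` entry is `1` iff `i ≡ j + 1 (mod m)`. -/
def cycMat (m : ℕ) : Matrix (Fin m) (Fin m) ℤ :=
  Matrix.of fun i j => if ((j : ℕ) + 1) % m = (i : ℕ) then 1 else 0

/-- `X_m ^ p` for an integer exponent `p`, well defined since `X_m ^ m = 1`. -/
def cycMatZPow (m : ℕ) (p : ℤ) : Matrix (Fin m) (Fin m) ℤ :=
  cycMat m ^ (p % (m : ℤ)).toNat

/-- The cokernel `ℤ^m / A·ℤ^n` of an integer matrix. -/
abbrev coker {m n : Type} [Fintype m] [Fintype n] (A : Matrix m n ℤ) :=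
  (m → ℤ) ⧸ LinearMap.range A.mulVecLin


/-- `s_p(A) = 1 - A + A² - ⋯ + (-1)^(p-1) A^(p-1)` for a square integer matrix `A`. -/
def sMat {n : Type} [Fintype n] [DecidableEq n] (p : ℕ) (A : Matrix n n ℤ) :
    Matrix n n ℤ :=
  ∑ i ∈ Finset.range p, ((-1 : ℤ) ^ i) • A ^ i

noncomputable section Aux
namespace St16

def Pk (k : ℕ) : ℤ[X] := X ^ (2*k) - 1

def fZ : ℤ[X] := (1 - X) * (1 + X^3 + X^6 + X^9)

def pk (k : ℕ) : ℕ := (((k:ℤ) - 6) % ((2*k : ℕ) : ℤ)).toNat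

def gZ (k : ℕ) : ℤ[X] := X ^ (pk k) + 1

def ak (k : ℕ) : AdjoinRoot (Pk k) := AdjoinRoot.mk _ fZ
def bk (k : ℕ) : AdjoinRoot (Pk k) := AdjoinRoot.mk _ (gZ k)

lemma Pk_monic (k : ℕ) (hk : 1 ≤ k) : (Pk k).Monic := by
  have := monic_X_pow_sub_C (1:ℤ) (n := 2*k) (by omega)
  simpa [Pk] using this

lemma Pk_natDegree (k : ℕ) : (Pk k).natDegree = 2*k := by
  have := natDegree_X_pow_sub_C (n := 2*k) (r := (1:ℤ))
  simpa [Pk] using this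

lemma root_pow (k : ℕ) : (AdjoinRoot.root (Pk k)) ^ (2*k) = 1 := by
  have h : AdjoinRoot.mk (Pk k) (Pk k) = 0 := AdjoinRoot.mk_self
  have : (AdjoinRoot.root (Pk k)) ^ (2*k) - 1 = 0 := by
    calc (AdjoinRoot.root (Pk k)) ^ (2*k) - 1
        = AdjoinRoot.mk (Pk k) (X ^ (2*k) - 1) := by simp
      _ = 0 := by rw [← h]; rfl
  simpa using sub_eq_zero.mp this

/-- power basis of `AdjoinRoot (Pk k)`, reindexed by `Fin (2*k)`. -/
def bas (k : ℕ) (hk : 1 ≤ k) : Module.Basis (Fin (2*k)) ℤ (AdjoinRoot (Pk k)) :=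
  ((AdjoinRoot.powerBasis' (Pk_monic k hk)).basis).reindex
    (finCongr (by rw [AdjoinRoot.powerBasis'_dim, Pk_natDegree]))

lemma bas_apply (k : ℕ) (hk : 1 ≤ k) (i : Fin (2*k)) :
    bas k hk i = (AdjoinRoot.root (Pk k)) ^ (i : ℕ) := by
  rw [bas, Module.Basis.reindex_apply, PowerBasis.basis_eq_pow, AdjoinRoot.powerBasis'_gen]
  rfl

lemma step_single (k : ℕ) (hk : 1 ≤ k) (z : AdjoinRoot (Pk k)) :
    (bas k hk).equivFun (AdjoinRoot.root (Pk k) * z)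
      = (cycMat (2*k)).mulVecLin ((bas k hk).equivFun z) := by
  set B := bas k hk
  let L1 : AdjoinRoot (Pk k) →ₗ[ℤ] (Fin (2*k) → ℤ) :=
    (B.equivFun.toLinearMap).comp (LinearMap.mulLeft ℤ (AdjoinRoot.root (Pk k)))
  let L2 : AdjoinRoot (Pk k) →ₗ[ℤ] (Fin (2*k) → ℤ) :=
    ((cycMat (2*k)).mulVecLin).comp B.equivFun.toLinearMap
  suffices h : L1 = L2 by exact LinearMap.congr_fun h z
  apply B.ext
  intro i
  show B.equivFun (AdjoinRoot.root (Pk k) * B i) = (cycMat (2*k)).mulVecLin (B.equivFun (B i))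
  have hm : 0 < 2*k := by omega
  have hib : AdjoinRoot.root (Pk k) * B i = B ⟨((i:ℕ)+1) % (2*k), Nat.mod_lt _ hm⟩ := by
    rw [bas_apply, bas_apply]
    simp only [Fin.val_mk]
    rcases Nat.lt_or_ge ((i:ℕ)+1) (2*k) with h | h
    · rw [Nat.mod_eq_of_lt h, pow_succ']
    · have hie : (i:ℕ)+1 = 2*k := by omega
      have : AdjoinRoot.root (Pk k) * AdjoinRoot.root (Pk k) ^ (i:ℕ)
          = AdjoinRoot.root (Pk k) ^ ((i:ℕ)+1) := (pow_succ' _ _).symm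
      rw [this, hie, Nat.mod_self, root_pow, pow_zero]
  rw [hib]
  ext j
  simp only [Module.Basis.equivFun_self, Matrix.mulVecLin_apply, Matrix.mulVec, dotProduct,
    cycMat, Matrix.of_apply]
  rw [Finset.sum_eq_single i]
  · by_cases hj : ((i:ℕ)+1) % (2*k) = (j:ℕ)
    · simp [Fin.ext_iff, hj]
    · simp [Fin.ext_iff, hj]
  · intro b _ hb
    simp [Ne.symm hb]
  · simp

lemma step_pow (k : ℕ) (hk : 1 ≤ k) (n : ℕ) (z : AdjoinRoot (Pk k)) :
    (bas k hk).equivFun (AdjoinRoot.root (Pk k) ^ n * z)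
      = ((cycMat (2*k)) ^ n).mulVecLin ((bas k hk).equivFun z) := by
  induction n with
  | zero => simp
  | succ n ih =>
      have : AdjoinRoot.root (Pk k) ^ (n+1) * z
          = AdjoinRoot.root (Pk k) * (AdjoinRoot.root (Pk k) ^ n * z) := by ring
      rw [this, step_single, ih, pow_succ']
      simp [Matrix.mulVecLin_mul]

lemma step_poly (k : ℕ) (hk : 1 ≤ k) (q : ℤ[X]) (z : AdjoinRoot (Pk k)) :
    (bas k hk).equivFun (AdjoinRoot.mk (Pk k) q * z)
      = (Polynomial.aeval (cycMat (2*k)) q).mulVecLin ((bas k hk).equivFun z) := by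
  induction q using Polynomial.induction_on' with
  | add p q hp hq =>
      rw [map_add, add_mul, map_add, map_add]
      rw [show ((aeval (cycMat (2 * k))) p + (aeval (cycMat (2 * k))) q).mulVecLin
          = ((aeval (cycMat (2 * k))) p).mulVecLin + ((aeval (cycMat (2 * k))) q).mulVecLin
        from Matrix.mulVecLin_add _ _]
      rw [LinearMap.add_apply, hp, hq]
  | monomial n a =>
      have h1 : AdjoinRoot.mk (Pk k) ((Polynomial.monomial n) a)
          = a • AdjoinRoot.root (Pk k) ^ n := by
        rw [← Polynomial.C_mul_X_pow_eq_monomial, _root_.map_mul, map_pow]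
        simp [Algebra.smul_def, AdjoinRoot.algebraMap_eq]
      have h2 : (Polynomial.aeval (cycMat (2*k))) ((Polynomial.monomial n) a)
          = a • (cycMat (2*k)) ^ n := by
        rw [← Polynomial.C_mul_X_pow_eq_monomial, _root_.map_mul, map_pow, Polynomial.aeval_X,
          Polynomial.aeval_C, Algebra.smul_def]
      rw [h1, h2, smul_mul_assoc, _root_.map_smul, step_pow]
      ext j
      simp only [Matrix.mulVecLin_apply, Matrix.smul_mulVec, Pi.smul_apply, smul_eq_mul]

lemma matA_eq (k : ℕ) :
    (1 - cycMat (2 * k)) * (1 + cycMat (2 * k) ^ 3 + cycMat (2 * k) ^ 6 + cycMat (2 * k) ^ 9)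
      = Polynomial.aeval (cycMat (2*k)) fZ := by
  simp [fZ, _root_.map_mul, map_add, map_pow, map_sub, _root_.map_one, Polynomial.aeval_X]

lemma matB_eq (k : ℕ) :
    (1 + cycMatZPow (2 * k) ((k : ℤ) - 6)) = Polynomial.aeval (cycMat (2*k)) (gZ k) := by
  simp only [gZ, map_add, map_pow, _root_.map_one, Polynomial.aeval_X]
  rw [add_comm]
  rfl

lemma range_eq (k : ℕ) (hk : 1 ≤ k) :
    Submodule.map ((bas k hk).equivFun : AdjoinRoot (Pk k) →ₗ[ℤ] (Fin (2*k) → ℤ))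
        ((Ideal.span {ak k, bk k}).restrictScalars ℤ)
      = LinearMap.range (Matrix.fromCols
          ((1 - cycMat (2 * k)) * (1 + cycMat (2 * k) ^ 3 + cycMat (2 * k) ^ 6 + cycMat (2 * k) ^ 9))
          (1 + cycMatZPow (2 * k) ((k : ℤ) - 6))).mulVecLin := by
  set A := (1 - cycMat (2 * k)) * (1 + cycMat (2 * k) ^ 3 + cycMat (2 * k) ^ 6 + cycMat (2 * k) ^ 9)
    with hA
  set Bm := (1 + cycMatZPow (2 * k) ((k : ℤ) - 6)) with hBm
  set E := (bas k hk).equivFun with hE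
  ext x
  constructor
  · rintro ⟨s, hs, rfl⟩
    have hs' : s ∈ Ideal.span {ak k, bk k} := hs
    rw [Ideal.mem_span_pair] at hs'
    obtain ⟨u, v, huv⟩ := hs'
    refine ⟨Sum.elim (E u) (E v), ?_⟩
    rw [Matrix.mulVecLin_apply, Matrix.fromCols_mulVec_sumElim, ← huv]
    rw [map_add]
    rw [show u * ak k = AdjoinRoot.mk (Pk k) fZ * u by rw [ak]; ring]
    rw [show v * bk k = AdjoinRoot.mk (Pk k) (gZ k) * v by rw [bk]; ring]
    simp only [LinearEquiv.coe_coe]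
    rw [step_poly, step_poly, ← matA_eq, ← matB_eq]
    rfl
  · rintro ⟨w, rfl⟩
    have hw : w = Sum.elim (w ∘ Sum.inl) (w ∘ Sum.inr) := by
      funext s; cases s <;> rfl
    refine ⟨AdjoinRoot.mk (Pk k) fZ * E.symm (w ∘ Sum.inl)
        + AdjoinRoot.mk (Pk k) (gZ k) * E.symm (w ∘ Sum.inr), ?_, ?_⟩
    · show _ ∈ Ideal.span {ak k, bk k}
      apply Submodule.add_mem
      · exact Ideal.mul_mem_right _ _ (Ideal.subset_span (by simp [ak]))
      · exact Ideal.mul_mem_right _ _ (Ideal.subset_span (by simp [bk]))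
    · simp only [LinearEquiv.coe_coe]
      rw [map_add, step_poly, step_poly, ← matA_eq, ← matB_eq,
        LinearEquiv.apply_symm_apply, LinearEquiv.apply_symm_apply]
      conv_rhs => rw [Matrix.mulVecLin_apply, hw, Matrix.fromCols_mulVec_sumElim]
      rfl

lemma step1 (k : ℕ) (hk : 1 ≤ k) :
    Nonempty (coker (Matrix.fromCols
        ((1 - cycMat (2 * k)) * (1 + cycMat (2 * k) ^ 3 + cycMat (2 * k) ^ 6 + cycMat (2 * k) ^ 9))
        (1 + cycMatZPow (2 * k) ((k : ℤ) - 6)))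
      ≃+ ((AdjoinRoot (Pk k)) ⧸ (Ideal.span {ak k, bk k}))) := by
  have e1 := Submodule.Quotient.equiv ((Ideal.span {ak k, bk k}).restrictScalars ℤ)
    (LinearMap.range (Matrix.fromCols
        ((1 - cycMat (2 * k)) * (1 + cycMat (2 * k) ^ 3 + cycMat (2 * k) ^ 6 + cycMat (2 * k) ^ 9))
        (1 + cycMatZPow (2 * k) ((k : ℤ) - 6))).mulVecLin)
    (bas k hk).equivFun (range_eq k hk)
  have e2 := Submodule.Quotient.restrictScalarsEquiv ℤ (Ideal.span {ak k, bk k})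
  exact ⟨e1.symm.toAddEquiv.trans e2.toAddEquiv⟩

lemma quotZ (k : ℕ) (hk : 1 ≤ k) (q : ℤ[X]) (hq : q.Monic) (hdvd : q ∣ Pk k) :
    Nonempty ((AdjoinRoot (Pk k) ⧸ (Ideal.span {AdjoinRoot.mk (Pk k) q}))
      ≃+ (Fin q.natDegree → ℤ)) := by
  have hroot : Polynomial.eval₂ (AdjoinRoot.of q) (AdjoinRoot.root q) (Pk k) = 0 := by
    obtain ⟨c, hc⟩ := hdvd
    rw [hc, Polynomial.eval₂_mul, AdjoinRoot.eval₂_root, zero_mul]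
  let χ : AdjoinRoot (Pk k) →+* AdjoinRoot q :=
    AdjoinRoot.lift (AdjoinRoot.of q) (AdjoinRoot.root q) hroot
  have hcomm : ∀ g : ℤ[X], χ (AdjoinRoot.mk (Pk k) g) = AdjoinRoot.mk q g := by
    intro g
    show AdjoinRoot.lift _ _ hroot (AdjoinRoot.mk (Pk k) g) = _
    rw [AdjoinRoot.lift_mk, ← AdjoinRoot.aeval_eq, Polynomial.aeval_def, Polynomial.eval₂_eq_eval_map,
      Polynomial.eval₂_eq_eval_map]
    congr 2
  have hker : RingHom.ker χ = Ideal.span {AdjoinRoot.mk (Pk k) q} := by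
    apply le_antisymm
    · intro x hx
      obtain ⟨g, rfl⟩ := AdjoinRoot.mk_surjective x
      rw [RingHom.mem_ker, hcomm, AdjoinRoot.mk_eq_zero] at hx
      obtain ⟨c, rfl⟩ := hx
      rw [_root_.map_mul]
      exact Ideal.mul_mem_right _ _ (Ideal.subset_span rfl)
    · rw [Ideal.span_le, Set.singleton_subset_iff]
      show χ (AdjoinRoot.mk (Pk k) q) = 0
      rw [hcomm, AdjoinRoot.mk_self]
  have hsurj : Function.Surjective χ := by
    intro t
    obtain ⟨g, rfl⟩ := AdjoinRoot.mk_surjective t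
    exact ⟨AdjoinRoot.mk (Pk k) g, hcomm g⟩
  have e1 : (AdjoinRoot (Pk k) ⧸ (Ideal.span {AdjoinRoot.mk (Pk k) q})) ≃+* AdjoinRoot q :=
    (Ideal.quotEquivOfEq hker.symm).trans (RingHom.quotientKerEquivOfSurjective hsurj)
  have hq0 : q.natDegree ≠ 0 ∨ True := Or.inr trivial
  let pb := AdjoinRoot.powerBasis' hq
  let e2 : AdjoinRoot q ≃ₗ[ℤ] (Fin q.natDegree → ℤ) :=
    (pb.basis.reindex (finCongr (by rw [AdjoinRoot.powerBasis'_dim]))).equivFun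
  exact ⟨e1.toAddEquiv.trans e2.toAddEquiv⟩

/-- casting `ℤ[X] → (ZMod 2)[X]`. -/
def c2 : ℤ →+* ZMod 2 := Int.castRingHom (ZMod 2)

lemma ker_map_c2 (g : ℤ[X]) (hg : g.map c2 = 0) : (2 : ℤ[X]) ∣ g := by
  have : (Polynomial.C (2:ℤ)) ∣ g := by
    rw [Polynomial.C_dvd_iff_dvd_coeff]
    intro n
    have := congrArg (fun p => Polynomial.coeff p n) hg
    simp only [Polynomial.coeff_map, Polynomial.coeff_zero] at this
    exact (ZMod.intCast_zmod_eq_zero_iff_dvd _ 2).mp this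
  simpa using this

lemma quot2 (k : ℕ) (hk : 1 ≤ k) (q : ℤ[X]) (hq2 : (q.map c2).Monic)
    (hdvd : q.map c2 ∣ (Pk k).map c2) :
    Nonempty ((AdjoinRoot (Pk k) ⧸ (Ideal.span {(2 : AdjoinRoot (Pk k)), AdjoinRoot.mk (Pk k) q}))
      ≃+ (Fin (q.map c2).natDegree → ZMod 2)) := by
  set q2 : (ZMod 2)[X] := q.map c2 with hq2def
  have hmapsurj : Function.Surjective (Polynomial.map c2 : ℤ[X] → (ZMod 2)[X]) :=
    Polynomial.map_surjective c2 (ZMod.intCast_surjective)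
  have heval : ∀ g : ℤ[X],
      Polynomial.eval₂ (Int.castRingHom (AdjoinRoot q2)) (AdjoinRoot.root q2) g
        = AdjoinRoot.mk q2 (g.map c2) := by
    intro g
    rw [← AdjoinRoot.aeval_eq, Polynomial.aeval_def, Polynomial.eval₂_map,
      Polynomial.eval₂_eq_eval_map, Polynomial.eval₂_eq_eval_map]
    congr 2
  have hroot : Polynomial.eval₂ (Int.castRingHom (AdjoinRoot q2)) (AdjoinRoot.root q2) (Pk k) = 0 := by
    rw [heval, AdjoinRoot.mk_eq_zero]
    exact hdvd
  let χ : AdjoinRoot (Pk k) →+* AdjoinRoot q2 :=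
    AdjoinRoot.lift (Int.castRingHom (AdjoinRoot q2)) (AdjoinRoot.root q2) hroot
  have hcomm : ∀ g : ℤ[X], χ (AdjoinRoot.mk (Pk k) g) = AdjoinRoot.mk q2 (g.map c2) := by
    intro g
    show AdjoinRoot.lift _ _ hroot (AdjoinRoot.mk (Pk k) g) = _
    rw [AdjoinRoot.lift_mk, heval]
  have h2mk : (2 : AdjoinRoot (Pk k)) = AdjoinRoot.mk (Pk k) 2 := by
    rw [map_ofNat]
  have hker : RingHom.ker χ = Ideal.span {(2 : AdjoinRoot (Pk k)), AdjoinRoot.mk (Pk k) q} := by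
    apply le_antisymm
    · intro x hx
      obtain ⟨g, rfl⟩ := AdjoinRoot.mk_surjective x
      rw [RingHom.mem_ker, hcomm, AdjoinRoot.mk_eq_zero] at hx
      obtain ⟨c, hc⟩ := hx
      obtain ⟨c₀, rfl⟩ := hmapsurj c
      have h0 : ((g - q * c₀).map c2) = 0 := by
        rw [Polynomial.map_sub, Polynomial.map_mul, ← hq2def, ← hc]
        ring
      obtain ⟨w, hw⟩ := ker_map_c2 _ h0
      have hg : g = 2 * w + q * c₀ := by linear_combination hw
      rw [hg, map_add, _root_.map_mul, _root_.map_mul]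
      apply Ideal.add_mem
      · exact Ideal.mul_mem_right _ _
          (by rw [← h2mk]; exact Ideal.subset_span (Set.mem_insert _ _))
      · exact Ideal.mul_mem_right _ _ (Ideal.subset_span (Set.mem_insert_of_mem _ rfl))
    · rw [Ideal.span_le]
      rintro x (rfl | rfl)
      · show χ (2 : AdjoinRoot (Pk k)) = 0
        rw [h2mk, hcomm]
        have : ((2:ℤ[X]).map c2) = 0 := by
          have : (2:ℤ[X]) = Polynomial.C 2 := by norm_num
          rw [this, Polynomial.map_C]
          have : (c2 2 : ZMod 2) = 0 := by decide
          rw [this, Polynomial.C_0]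
        rw [this, _root_.map_zero]
      · show χ (AdjoinRoot.mk (Pk k) q) = 0
        rw [hcomm, ← hq2def, AdjoinRoot.mk_self]
  have hsurj : Function.Surjective χ := by
    intro t
    obtain ⟨r, rfl⟩ := AdjoinRoot.mk_surjective t
    obtain ⟨r₀, rfl⟩ := hmapsurj r
    exact ⟨AdjoinRoot.mk (Pk k) r₀, hcomm r₀⟩
  have e1 : (AdjoinRoot (Pk k) ⧸ (Ideal.span {(2 : AdjoinRoot (Pk k)), AdjoinRoot.mk (Pk k) q}))
      ≃+* AdjoinRoot q2 :=
    (Ideal.quotEquivOfEq hker.symm).trans (RingHom.quotientKerEquivOfSurjective hsurj)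
  let pb := AdjoinRoot.powerBasis' hq2
  let e2 : AdjoinRoot q2 ≃ₗ[ZMod 2] (Fin q2.natDegree → ZMod 2) :=
    (pb.basis.reindex (finCongr (by rw [AdjoinRoot.powerBasis'_dim]))).equivFun
  exact ⟨e1.toAddEquiv.trans e2.toAddEquiv⟩

lemma pk_cast (k : ℕ) (hk : 1 ≤ k) : (pk k : ℤ) = ((k:ℤ) - 6) % (2*(k:ℤ)) := by
  rw [pk, Int.toNat_of_nonneg]
  · norm_num
  · apply Int.emod_nonneg
    have : (0:ℤ) < 2*(k:ℤ)  := by positivity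
    push_cast
    omega

lemma pk_dvd (k : ℕ) (hk : 1 ≤ k) : (2*(k:ℤ)) ∣ ((pk k : ℤ) - ((k:ℤ) - 6)) := by
  refine ⟨-(((k:ℤ)-6)/(2*(k:ℤ))), ?_⟩
  rw [pk_cast k hk, Int.emod_def]
  ring

lemma bk_eq (k : ℕ) : bk k = (AdjoinRoot.root (Pk k)) ^ (pk k) + 1 := by
  rw [bk, gZ, map_add, map_pow, AdjoinRoot.mk_X, _root_.map_one]

lemma pow2c (k : ℕ) (hk : 1 ≤ k) {I : Ideal (AdjoinRoot (Pk k))} (hb : bk k ∈ I)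
    (c' : ℕ) (hc : Nat.gcd (pk k) k ∣ c') :
    Ideal.Quotient.mk I ((AdjoinRoot.root (Pk k)) ^ (2*c')) = 1 := by
  set π := Ideal.Quotient.mk I with hπ
  set y := π (AdjoinRoot.root (Pk k)) with hy
  have hym : y ^ (2*k) = 1 := by
    rw [hy, ← map_pow, root_pow, _root_.map_one]
  have hyp : y ^ (pk k) = -1 := by
    have h0 : π (bk k) = 0 := Ideal.Quotient.eq_zero_iff_mem.mpr hb
    rw [bk_eq, map_add, _root_.map_one, map_pow] at h0
    linear_combination h0
  have e : 2*k = (2*k-1)+1 := by omega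
  let u : (AdjoinRoot (Pk k) ⧸ I)ˣ :=
    { val := y, inv := y^(2*k-1),
      val_inv := by rw [← pow_succ', ← e, hym],
      inv_val := by rw [← pow_succ, ← e, hym] }
  have hu1 : u ^ (2*k) = 1 := by
    ext
    rw [Units.val_pow_eq_pow_val]
    exact hym
  have hu2 : u ^ (2 * pk k) = 1 := by
    ext
    rw [Units.val_pow_eq_pow_val]
    show y ^ (2 * pk k) = 1
    rw [mul_comm, pow_mul, hyp]
    norm_num
  have horder : orderOf u ∣ 2 * Nat.gcd (pk k) k := by
    rw [← Nat.gcd_mul_left]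
    exact Nat.dvd_gcd (orderOf_dvd_of_pow_eq_one hu2) (orderOf_dvd_of_pow_eq_one hu1)
  have : u ^ (2*c') = 1 :=
    orderOf_dvd_iff_pow_eq_one.mp (horder.trans (Nat.mul_dvd_mul_left 2 hc))
  have := congrArg Units.val this
  rw [Units.val_pow_eq_pow_val] at this
  rw [map_pow]
  exact this

lemma rootpow_r (k : ℕ) (hk : 1 ≤ k) {I : Ideal (AdjoinRoot (Pk k))} (hb : bk k ∈ I)
    (c' r : ℕ) (hc : Nat.gcd (pk k) k ∣ c') (hr : pk k % (2*c') = r) :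
    (AdjoinRoot.root (Pk k)) ^ r + 1 ∈ I := by
  set π := Ideal.Quotient.mk I with hπ
  set y := π (AdjoinRoot.root (Pk k)) with hy
  have h2c : y ^ (2*c') = 1 := by
    have := pow2c k hk hb c' hc
    rw [map_pow] at this
    exact this
  have hyp : y ^ (pk k) = -1 := by
    have h0 : π (bk k) = 0 := Ideal.Quotient.eq_zero_iff_mem.mpr hb
    rw [bk_eq, map_add, _root_.map_one, map_pow] at h0
    linear_combination h0
  have hdm : pk k = 2*c' * (pk k / (2*c')) + r := by rw [← hr]; exact (Nat.div_add_mod _ _).symm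
  have hyr : y ^ r = -1 := by
    rw [hdm, pow_add, pow_mul, h2c, one_pow, one_mul] at hyp
    exact hyp
  rw [← Ideal.Quotient.eq_zero_iff_mem]
  rw [map_add, _root_.map_one, map_pow]
  rw [← hy, hyr]
  ring

lemma gcd_pk_dvd_six (k : ℕ) (hk : 1 ≤ k) : Nat.gcd (pk k) k ∣ 6 := by
  obtain ⟨t, ht⟩ := pk_dvd k hk
  have h1 : ((Nat.gcd (pk k) k : ℤ)) ∣ (pk k : ℤ) :=
    Int.natCast_dvd_natCast.mpr (Nat.gcd_dvd_left _ _)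
  have h2 : ((Nat.gcd (pk k) k : ℤ)) ∣ (k : ℤ) :=
    Int.natCast_dvd_natCast.mpr (Nat.gcd_dvd_right _ _)
  have h6 : ((Nat.gcd (pk k) k : ℤ)) ∣ (6 : ℤ) := by
    have he : (6:ℤ) = (k:ℤ) - (pk k : ℤ) + (2*(k:ℤ))*t := by linarith [ht]
    rw [he]
    exact dvd_add (dvd_sub h2 h1) ((h2.mul_left 2).mul_right t)
  exact_mod_cast h6

lemma dvdB (s t : ℕ) : ((X:ℤ[X])^s - 1) ∣ (X^(s*t) - 1) := by
  have h := sub_dvd_pow_sub_pow ((X:ℤ[X])^s) 1 t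
  rw [one_pow, ← pow_mul] at h
  exact h

lemma dvdA (s t : ℕ) : ((X:ℤ[X])^s + 1) ∣ (X^(2*s*t) - 1) := by
  have h1 : ((X:ℤ[X])^s + 1) ∣ (X^(2*s) - 1) := ⟨X^s - 1, by ring⟩
  have h2 := dvdB (2*s) t
  rw [mul_assoc] at *
  exact h1.trans (by rw [← mul_assoc]; exact dvdB (2*s) t)

lemma dvdC (s t : ℕ) : ((X:ℤ[X])^s + 1) ∣ (X^(s*(2*t+1)) + 1) := by
  have h := sub_dvd_pow_sub_pow ((X:ℤ[X])^s) (-1) (2*t+1)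
  have hodd : ((-1:ℤ[X])^(2*t+1)) = -1 := Odd.neg_one_pow ⟨t, by ring⟩
  rw [hodd, ← pow_mul, sub_neg_eq_add, sub_neg_eq_add] at h
  exact h

lemma mk_pow_add_one (k : ℕ) (s : ℕ) :
    AdjoinRoot.mk (Pk k) ((X:ℤ[X])^s + 1) = (AdjoinRoot.root (Pk k))^s + 1 := by
  rw [map_add, map_pow, AdjoinRoot.mk_X, _root_.map_one]

lemma mk_pow_sub_one (k : ℕ) (s : ℕ) :
    AdjoinRoot.mk (Pk k) ((X:ℤ[X])^s - 1) = (AdjoinRoot.root (Pk k))^s - 1 := by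
  rw [map_sub, map_pow, AdjoinRoot.mk_X, _root_.map_one]

lemma span_eq_Z (k : ℕ) (hk : 1 ≤ k) (s : ℕ)
    (hfd : ((X:ℤ[X])^s + 1) ∣ fZ)
    (hgc : Nat.gcd (pk k) k ∣ s)
    (hps : pk k % (2*s) = s) :
    Ideal.span {ak k, bk k} = Ideal.span {AdjoinRoot.mk (Pk k) ((X:ℤ[X])^s + 1)} := by
  apply le_antisymm
  · rw [Ideal.span_le]
    rintro x (rfl | rfl)
    · exact Ideal.mem_span_singleton.mpr (map_dvd (AdjoinRoot.mk (Pk k)) hfd)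
    · refine Ideal.mem_span_singleton.mpr ?_
      set q := pk k / (2*s) with hq
      have h1 : pk k = 2*s*q + s := by
        rw [hq]
        conv_lhs => rw [← Nat.div_add_mod (pk k) (2*s)]
        rw [hps]
      have h2 : pk k = s*(2*q+1) := by rw [h1]; ring
      show AdjoinRoot.mk (Pk k) ((X:ℤ[X])^s + 1) ∣ AdjoinRoot.mk (Pk k) (gZ k)
      rw [gZ, h2]
      exact map_dvd (AdjoinRoot.mk (Pk k)) (dvdC s q)
  · rw [Ideal.span_le, Set.singleton_subset_iff]
    have hmem := rootpow_r k hk (I := Ideal.span {ak k, bk k})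
      (Ideal.subset_span (Set.mem_insert_of_mem _ rfl)) s s hgc hps
    rw [← mk_pow_add_one k s] at hmem
    exact hmem

lemma span_eq_two4 (k : ℕ) (hk : 1 ≤ k)
    (hfd : ((X:ℤ[X])^4 - 1) ∣ fZ)
    (hgc : Nat.gcd (pk k) k ∣ 2)
    (hps : pk k % 4 = 0) :
    Ideal.span {ak k, bk k}
      = Ideal.span {(2 : AdjoinRoot (Pk k)), AdjoinRoot.mk (Pk k) ((X:ℤ[X])^4 - 1)} := by
  have hpk4 : (X:ℤ[X])^4 - 1 ∣ X^(pk k) - 1 := by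
    have h4 : 4 * (pk k / 4) = pk k := Nat.mul_div_cancel' ⟨pk k / 4, by omega⟩
    have := dvdB 4 (pk k / 4)
    rwa [h4] at this
  have hbk2 : bk k = (AdjoinRoot.root (Pk k) ^ (pk k) - 1) + 2 := by
    rw [bk_eq]; ring
  apply le_antisymm
  · rw [Ideal.span_le]
    rintro x (rfl | rfl)
    · obtain ⟨w, hw⟩ := map_dvd (AdjoinRoot.mk (Pk k)) hfd
      have hak : ak k = AdjoinRoot.mk (Pk k) ((X:ℤ[X])^4 - 1) * w := hw
      show ak k ∈ Ideal.span {(2 : AdjoinRoot (Pk k)), AdjoinRoot.mk (Pk k) ((X:ℤ[X])^4 - 1)}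
      rw [hak]
      exact Ideal.mul_mem_right _ _ (Ideal.subset_span (Set.mem_insert_of_mem _ rfl))
    · show bk k ∈ Ideal.span {(2 : AdjoinRoot (Pk k)), AdjoinRoot.mk (Pk k) ((X:ℤ[X])^4 - 1)}
      rw [hbk2]
      apply Ideal.add_mem
      · obtain ⟨w, hw⟩ := map_dvd (AdjoinRoot.mk (Pk k)) hpk4
        rw [mk_pow_sub_one, mk_pow_sub_one] at hw
        rw [hw]
        exact Ideal.mul_mem_right _ _ (Ideal.subset_span (Set.mem_insert_of_mem _ rfl))
      · exact Ideal.subset_span (Set.mem_insert _ _)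
  · have hθ : (AdjoinRoot.root (Pk k))^4 - 1 ∈ Ideal.span {ak k, bk k} := by
      have := pow2c k hk (I := Ideal.span {ak k, bk k})
        (Ideal.subset_span (Set.mem_insert_of_mem _ rfl)) 2 hgc
      rw [← Ideal.Quotient.eq_zero_iff_mem, map_sub, map_pow, _root_.map_one]
      rw [map_pow] at this
      rw [show (2*2 : ℕ) = 4 from rfl] at this
      rw [this]
      ring
    have hpkmem : (AdjoinRoot.root (Pk k))^(pk k) - 1 ∈ Ideal.span {ak k, bk k} := by
      obtain ⟨w, hw⟩ := map_dvd (AdjoinRoot.mk (Pk k)) hpk4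
      rw [mk_pow_sub_one, mk_pow_sub_one] at hw
      rw [hw]
      exact Ideal.mul_mem_right _ _ hθ
    have h2mem : (2 : AdjoinRoot (Pk k)) ∈ Ideal.span {ak k, bk k} := by
      have hb : bk k ∈ Ideal.span {ak k, bk k} :=
        Ideal.subset_span (Set.mem_insert_of_mem _ rfl)
      have hsub := Ideal.sub_mem _ hb hpkmem
      have h22 : (2 : AdjoinRoot (Pk k)) = bk k - (AdjoinRoot.root (Pk k) ^ (pk k) - 1) := by
        rw [hbk2]; ring
      rw [h22]
      exact hsub
    rw [Ideal.span_le]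
    rintro x (rfl | rfl)
    · exact h2mem
    · exact hθ

lemma span_eq_two12 (k : ℕ) (hk : 1 ≤ k)
    (hfd : fZ ∣ ((X:ℤ[X])^12 - 1))
    (hps : pk k % 12 = 0) :
    Ideal.span {ak k, bk k} = Ideal.span {(2 : AdjoinRoot (Pk k)), ak k} := by
  have hpk12 : (X:ℤ[X])^12 - 1 ∣ X^(pk k) - 1 := by
    have h12 : 12 * (pk k / 12) = pk k := Nat.mul_div_cancel' ⟨pk k / 12, by omega⟩
    have := dvdB 12 (pk k / 12)
    rwa [h12] at this
  have hfpk : fZ ∣ (X:ℤ[X])^(pk k) - 1 := hfd.trans hpk12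
  have hbk2 : bk k = (AdjoinRoot.root (Pk k) ^ (pk k) - 1) + 2 := by
    rw [bk_eq]; ring
  have hpkmem : ∀ (I : Ideal (AdjoinRoot (Pk k))), ak k ∈ I →
      (AdjoinRoot.root (Pk k))^(pk k) - 1 ∈ I := by
    intro I ha
    obtain ⟨w, hw⟩ := map_dvd (AdjoinRoot.mk (Pk k)) hfpk
    rw [mk_pow_sub_one] at hw
    rw [hw]
    exact Ideal.mul_mem_right _ _ ha
  apply le_antisymm
  · rw [Ideal.span_le]
    rintro x (rfl | rfl)
    · exact Ideal.subset_span (Set.mem_insert_of_mem _ rfl)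
    · rw [hbk2]
      exact Ideal.add_mem _
        (hpkmem _ (Ideal.subset_span (Set.mem_insert_of_mem _ rfl)))
        (Ideal.subset_span (Set.mem_insert _ _))
  · rw [Ideal.span_le]
    rintro x (rfl | rfl)
    · have hb : bk k ∈ Ideal.span {ak k, bk k} :=
        Ideal.subset_span (Set.mem_insert_of_mem _ rfl)
      have ha : ak k ∈ Ideal.span {ak k, bk k} := Ideal.subset_span (Set.mem_insert _ _)
      have hsub := Ideal.sub_mem _ hb (hpkmem _ ha)
      have h22 : (2 : AdjoinRoot (Pk k)) = bk k - (AdjoinRoot.root (Pk k) ^ (pk k) - 1) := by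
        rw [hbk2]; ring
      rw [h22]
      exact hsub
    · exact Ideal.subset_span (Set.mem_insert _ _)

lemma monic_Xs (s : ℕ) (hs : s ≠ 0) : ((X:ℤ[X])^s + 1).Monic := by
  have := monic_X_pow_add_C (a := (1:ℤ)) hs
  simpa using this

lemma deg_Xs (s : ℕ) : ((X:ℤ[X])^s + 1).natDegree = s := by
  have := natDegree_X_pow_add_C (n := s) (r := (1:ℤ))
  simpa using this

lemma hfd1 : ((X:ℤ[X])^1 + 1) ∣ fZ := ⟨(1-X)*(1-X+X^2)*(1+X^6), by rw [fZ]; ring⟩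
lemma hfd3 : ((X:ℤ[X])^3 + 1) ∣ fZ := ⟨(1-X)*(1+X^6), by rw [fZ]; ring⟩
lemma hfd2 : ((X:ℤ[X])^2 + 1) ∣ fZ := ⟨(1-X)*(1+X^3)*(1-X^2+X^4), by rw [fZ]; ring⟩
lemma hfd6 : ((X:ℤ[X])^6 + 1) ∣ fZ := ⟨(1-X)*(1+X^3), by rw [fZ]; ring⟩
lemma hfd4 : ((X:ℤ[X])^4 - 1) ∣ fZ := ⟨-((1-X+X^2)*(1-X^2+X^4)), by rw [fZ]; ring⟩
lemma hfd12 : fZ ∣ ((X:ℤ[X])^12 - 1) := ⟨-(1+X+X^2), by rw [fZ]; ring⟩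

lemma Xs_dvd_Pk (k s : ℕ) (hs : 0 < s) (hsk : s ∣ k) : ((X:ℤ[X])^s + 1) ∣ Pk k := by
  have h2st : 2*s*(k/s) = 2*k := by rw [mul_assoc, Nat.mul_div_cancel' hsk]
  have := dvdA s (k/s)
  rw [h2st] at this
  exact this

/-- the ℤ-coefficient (d ∈ {1,3,4,12}) case, abstract. -/
lemma caseZ (k : ℕ) (hk : 1 ≤ k) (s : ℕ) (hs : 0 < s) (hsk : s ∣ k)
    (hfd : ((X:ℤ[X])^s + 1) ∣ fZ)
    (hgc : Nat.gcd (pk k) k ∣ s)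
    (hps : pk k % (2*s) = s) :
    Nonempty (coker (Matrix.fromCols
        ((1 - cycMat (2 * k)) * (1 + cycMat (2 * k) ^ 3 + cycMat (2 * k) ^ 6 + cycMat (2 * k) ^ 9))
        (1 + cycMatZPow (2 * k) ((k : ℤ) - 6))) ≃+ (Fin s → ℤ)) := by
  obtain ⟨e0⟩ := step1 k hk
  have espan := span_eq_Z k hk s hfd hgc hps
  obtain ⟨e2⟩ := quotZ k hk ((X:ℤ[X])^s + 1) (monic_Xs s hs.ne') (Xs_dvd_Pk k s hs hsk)
  rw [deg_Xs] at e2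
  exact ⟨(e0.trans (Ideal.quotEquivOfEq espan).toAddEquiv).trans e2⟩

lemma case2 (k : ℕ) (hk : 1 ≤ k) (h2k : 2 ∣ k)
    (hgc : Nat.gcd (pk k) k ∣ 2)
    (hps : pk k % 4 = 0) :
    Nonempty (coker (Matrix.fromCols
        ((1 - cycMat (2 * k)) * (1 + cycMat (2 * k) ^ 3 + cycMat (2 * k) ^ 6 + cycMat (2 * k) ^ 9))
        (1 + cycMatZPow (2 * k) ((k : ℤ) - 6))) ≃+ (Fin 4 → ZMod 2)) := by
  obtain ⟨e0⟩ := step1 k hk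
  have espan := span_eq_two4 k hk hfd4 hgc hps
  have hqPk : ((X:ℤ[X])^4 - 1) ∣ Pk k := by
    have h4 : 4*(k/2) = 2*k := by omega
    have := dvdB 4 (k/2)
    rw [h4] at this
    exact this
  have hmon : ((X:ℤ[X])^4 - 1).Monic := by
    have := monic_X_pow_sub_C (1:ℤ) (n := 4) (by norm_num)
    simpa using this
  have hq2 : (((X:ℤ[X])^4 - 1).map c2).Monic := hmon.map c2
  have hdvd2 : ((X:ℤ[X])^4 - 1).map c2 ∣ (Pk k).map c2 := by
    have := map_dvd (Polynomial.mapRingHom c2) hqPk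
    simpa using this
  obtain ⟨e2⟩ := quot2 k hk ((X:ℤ[X])^4 - 1) hq2 hdvd2
  have hdeg : (((X:ℤ[X])^4 - 1).map c2).natDegree = 4 := by
    rw [hmon.natDegree_map]
    have := natDegree_X_pow_sub_C (n := 4) (r := (1:ℤ))
    simpa using this
  rw [hdeg] at e2
  exact ⟨(e0.trans (Ideal.quotEquivOfEq espan).toAddEquiv).trans e2⟩

lemma fZ_map_c2 : fZ.map c2
    = (X:(ZMod 2)[X])^10 + (X^9 + X^7 + X^6 + X^4 + X^3 + X + 1) := by
  rw [fZ]
  simp only [Polynomial.map_mul, Polynomial.map_add, Polynomial.map_sub, Polynomial.map_one,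
    Polynomial.map_pow, Polynomial.map_X]
  reduce_mod_char
  ring

lemma case6 (k : ℕ) (hk : 1 ≤ k) (h6k : 6 ∣ k)
    (hps : pk k % 12 = 0) :
    Nonempty (coker (Matrix.fromCols
        ((1 - cycMat (2 * k)) * (1 + cycMat (2 * k) ^ 3 + cycMat (2 * k) ^ 6 + cycMat (2 * k) ^ 9))
        (1 + cycMatZPow (2 * k) ((k : ℤ) - 6))) ≃+ (Fin 10 → ZMod 2)) := by
  obtain ⟨e0⟩ := step1 k hk
  have espan : Ideal.span {ak k, bk k}
      = Ideal.span {(2 : AdjoinRoot (Pk k)), AdjoinRoot.mk (Pk k) fZ} :=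
    span_eq_two12 k hk hfd12 hps
  have hqPk : fZ ∣ Pk k := by
    have h12 : 12*(k/6) = 2*k := by omega
    have h1 := dvdB 12 (k/6)
    rw [h12] at h1
    exact hfd12.trans h1
  have hq2 : (fZ.map c2).Monic := by
    rw [fZ_map_c2]
    apply monic_X_pow_add
    have hde : ((X:(ZMod 2)[X])^9 + X^7 + X^6 + X^4 + X^3 + X + 1).degree ≤ 9 := by
      compute_degree
    exact lt_of_le_of_lt hde (by norm_num)
  have hdvd2 : fZ.map c2 ∣ (Pk k).map c2 := by
    have := map_dvd (Polynomial.mapRingHom c2) hqPk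
    simpa using this
  obtain ⟨e2⟩ := quot2 k hk fZ hq2 hdvd2
  have hdeg : (fZ.map c2).natDegree = 10 := by
    rw [fZ_map_c2]
    compute_degree!
  rw [hdeg] at e2
  exact ⟨(e0.trans (Ideal.quotEquivOfEq espan).toAddEquiv).trans e2⟩

end St16
end Aux

theorem stmt_16 (k : ℕ) (hk : 1 ≤ k) (d : ℕ) (hd : d = Nat.gcd 12 k) :
    (d = 1 ∨ d = 3 → Nonempty (coker (Matrix.fromCols
        ((1 - cycMat (2 * k)) * (1 + cycMat (2 * k) ^ 3 + cycMat (2 * k) ^ 6 + cycMat (2 * k) ^ 9))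
        (1 + cycMatZPow (2 * k) ((k : ℤ) - 6))) ≃+ (Fin d → ℤ))) ∧
    (d = 2 ∨ d = 6 → Nonempty (coker (Matrix.fromCols
        ((1 - cycMat (2 * k)) * (1 + cycMat (2 * k) ^ 3 + cycMat (2 * k) ^ 6 + cycMat (2 * k) ^ 9))
        (1 + cycMatZPow (2 * k) ((k : ℤ) - 6))) ≃+ (Fin ((3 * d + 2) / 2) → ZMod 2))) ∧
    (d = 4 ∨ d = 12 → Nonempty (coker (Matrix.fromCols
        ((1 - cycMat (2 * k)) * (1 + cycMat (2 * k) ^ 3 + cycMat (2 * k) ^ 6 + cycMat (2 * k) ^ 9))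
        (1 + cycMatZPow (2 * k) ((k : ℤ) - 6))) ≃+ (Fin (d / 2) → ℤ))) := by
  have hdk : d ∣ k := hd ▸ Nat.gcd_dvd_right 12 k
  have hdvdk : ∀ e : ℕ, e ∣ 12 → e ∣ k → e ∣ d := fun e h1 h2 => hd ▸ Nat.dvd_gcd h1 h2
  have hg6 := St16.gcd_pk_dvd_six k hk
  have hgd : Nat.gcd (St16.pk k) k ∣ d :=
    hdvdk _ (hg6.trans (by norm_num)) (Nat.gcd_dvd_right _ _)
  have hdd := St16.pk_dvd k hk
  refine ⟨?_, ?_, ?_⟩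
  · rintro (hd1 | hd3)
    · have h2 : ¬ (2 ∣ k) := fun h => by
        have := hdvdk 2 (by norm_num) h; omega
      have h2' : (2:ℤ) ∣ 2*(k:ℤ) := ⟨k, by ring⟩
      obtain ⟨t, ht⟩ := h2'.trans hdd
      have hk2 : k % 2 = 1 := by omega
      have hps : St16.pk k % (2*1) = 1 := by omega
      rw [hd1]
      exact St16.caseZ k hk 1 one_pos (one_dvd k) St16.hfd1 (hd1 ▸ hgd) hps
    · have h3k : 3 ∣ k := (by norm_num : (3:ℕ) ∣ 3).trans (hd3 ▸ hdk)
      have h2 : ¬ (2 ∣ k) := fun h => by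
        have := hdvdk 2 (by norm_num) h; omega
      have h6' : (6:ℤ) ∣ 2*(k:ℤ) := by
        obtain ⟨t, rfl⟩ := h3k
        exact ⟨t, by push_cast; ring⟩
      obtain ⟨t, ht⟩ := h6'.trans hdd
      have hk2 : k % 2 = 1 := by omega
      have hk6 : k % 6 = 3 := by omega
      have hps : St16.pk k % (2*3) = 3 := by omega
      rw [hd3]
      exact St16.caseZ k hk 3 (by norm_num) h3k St16.hfd3 (hd3 ▸ hgd) hps
  · rintro (hd2 | hd6)
    · have h2k : 2 ∣ k := (by norm_num : (2:ℕ) ∣ 2).trans (hd2 ▸ hdk)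
      have hn4 : ¬ (4 ∣ k) := fun h => by
        have := hdvdk 4 (by norm_num) h; omega
      have h4' : (4:ℤ) ∣ 2*(k:ℤ) := by
        obtain ⟨t, rfl⟩ := h2k
        exact ⟨t, by push_cast; ring⟩
      obtain ⟨t, ht⟩ := h4'.trans hdd
      have hk4 : k % 4 = 2 := by omega
      have hps : St16.pk k % 4 = 0 := by omega
      rw [hd2, show (3*2+2)/2 = 4 by norm_num]
      exact St16.case2 k hk h2k (hd2 ▸ hgd) hps
    · have h6k : 6 ∣ k := (by norm_num : (6:ℕ) ∣ 6).trans (hd6 ▸ hdk)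
      have hn4 : ¬ (4 ∣ k) := fun h => by
        have := hdvdk 4 (by norm_num) h; omega
      have h12' : (12:ℤ) ∣ 2*(k:ℤ) := by
        obtain ⟨t, rfl⟩ := h6k
        exact ⟨t, by push_cast; ring⟩
      obtain ⟨t, ht⟩ := h12'.trans hdd
      have hk12 : k % 12 = 6 := by omega
      have hps : St16.pk k % 12 = 0 := by omega
      rw [hd6, show (3*6+2)/2 = 10 by norm_num]
      exact St16.case6 k hk h6k hps
  · rintro (hd4 | hd12)
    · have h4k : 4 ∣ k := (by norm_num : (4:ℕ) ∣ 4).trans (hd4 ▸ hdk)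
      have h2k : 2 ∣ k := (by norm_num : (2:ℕ) ∣ 4).trans h4k
      have hgc : Nat.gcd (St16.pk k) k ∣ 2 := by
        have h := Nat.dvd_gcd (hd4 ▸ hgd) hg6
        have hge : Nat.gcd 4 6 = 2 := by norm_num
        rwa [hge] at h
      have h4' : (4:ℤ) ∣ 2*(k:ℤ) := by
        obtain ⟨t, rfl⟩ := h2k
        exact ⟨t, by push_cast; ring⟩
      obtain ⟨t, ht⟩ := h4'.trans hdd
      have hk4 : k % 4 = 0 := by omega
      have hps : St16.pk k % (2*2) = 2 := by omega
      rw [hd4, show (4:ℕ)/2 = 2 by norm_num]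
      exact St16.caseZ k hk 2 (by norm_num) h2k St16.hfd2 hgc hps
    · have h12k : 12 ∣ k := (by norm_num : (12:ℕ) ∣ 12).trans (hd12 ▸ hdk)
      have h6k : 6 ∣ k := (by norm_num : (6:ℕ) ∣ 12).trans h12k
      have h12' : (12:ℤ) ∣ 2*(k:ℤ) := by
        obtain ⟨t, rfl⟩ := h6k
        exact ⟨t, by push_cast; ring⟩
      obtain ⟨t, ht⟩ := h12'.trans hdd
      have hk12 : k % 12 = 0 := by omega
      have hps : St16.pk k % (2*6) = 6 := by omega
      rw [hd12, show (12:ℕ)/2 = 6 by norm_num]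
      exact St16.caseZ k hk 6 (by norm_num) h6k St16.hfd6 hg6 hps
end

section
/- Let k ≥ 1 be an integer and put d = gcd(12, k). Then Coker [1_{2k} + X_{2k}^{6} 1_{2k} + X_{2k}^{k−6}] ≅ (ℤ/2ℤ)^{d} if d ∈ {1, 2, 3, 6} and ≅ ℤ^{d/2} if d ∈ {4, 12}; and Coker [1_{2k} + X_{2k}^{2} 1_{2k} + X_{2k}^{k−6}] ≅ ℤ/2ℤ if d ∈ {1, 3}, ≅ (ℤ/2ℤ)^{2} if d ∈ {2, 6}, and ≅ ℤ^{2} if d ∈ {4, 12}. -/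
open Matrix Polynomial

lemma cycMat_pow_apply (m t : ℕ) (hm : 0 < m) (i j : Fin m) :
    (cycMat m ^ t) i j = if ((j : ℕ) + t) % m = (i : ℕ) then 1 else 0 := by
  induction t generalizing j with
  | zero =>
    simp [Matrix.one_apply, Nat.mod_eq_of_lt j.isLt, Fin.ext_iff, eq_comm]
  | succ t ih =>
    rw [pow_succ, Matrix.mul_apply]
    have hcyc : ∀ l : Fin m, (cycMat m) l j =
        if l = (⟨((j:ℕ) + 1) % m, Nat.mod_lt _ hm⟩ : Fin m) then 1 else 0 := by
      intro l
      simp only [cycMat, Matrix.of_apply, Fin.ext_iff, eq_comm]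
    simp only [hcyc, mul_ite, mul_one, mul_zero]
    rw [Finset.sum_ite_eq' Finset.univ _ (fun l => (cycMat m ^ t) i l)]
    simp only [Finset.mem_univ, if_true]
    rw [ih]
    simp only [Nat.mod_add_mod]
    have h : (j:ℕ) + 1 + t = (j:ℕ) + (t+1) := by omega
    rw [h]

namespace Stmt17

section Common
variable (k : ℕ) (hk : 0 < k)

def fshift (t : ℕ) (j : Fin (2*k)) : Fin (2*k) :=
  ⟨((j : ℕ) + t) % (2*k), Nat.mod_lt _ (by omega)⟩

def ishift (s : ℤ) (j : Fin (2*k)) : Fin (2*k) :=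
  ⟨(((j : ℕ) : ℤ) + s % ((2*k : ℕ) : ℤ)).toNat % (2*k), Nat.mod_lt _ (by omega)⟩

lemma ishift_val (s : ℤ) (j : Fin (2*k)) :
    ((ishift k hk s j : ℕ) : ℤ) = (((j : ℕ) : ℤ) + s) % ((2*k : ℕ) : ℤ) := by
  have hNz : ((2*k : ℕ) : ℤ) ≠ 0 := by exact_mod_cast (by omega : (2*k : ℕ) ≠ 0)
  have h0 : 0 ≤ s % ((2*k:ℕ):ℤ) := Int.emod_nonneg _ hNz
  have hx : (0:ℤ) ≤ ((j:ℕ):ℤ) + s % ((2*k:ℕ):ℤ) := by positivity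
  simp only [ishift]
  rw [Int.natCast_mod, Int.toNat_of_nonneg hx, add_comm ((j:ℕ):ℤ), Int.emod_add_emod,
    add_comm s]

lemma ishift_coe (t : ℕ) (j : Fin (2*k)) : ishift k hk (t : ℤ) j = fshift k hk t j := by
  apply Fin.ext; apply @Nat.cast_injective ℤ _
  rw [ishift_val]
  show _ = ((((j:ℕ) + t) % (2*k) : ℕ) : ℤ)
  rw [Int.natCast_mod]
  push_cast
  ring_nf

lemma ishift_add (s t : ℤ) (j : Fin (2*k)) :
    ishift k hk (s + t) j = ishift k hk t (ishift k hk s j) := by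
  apply Fin.ext; apply @Nat.cast_injective ℤ _
  rw [ishift_val, ishift_val, ishift_val, Int.emod_add_emod, add_assoc]

lemma ishift_zero (j : Fin (2*k)) : ishift k hk 0 j = j := by
  apply Fin.ext; apply @Nat.cast_injective ℤ _
  rw [ishift_val, add_zero, Int.emod_eq_of_lt (by positivity) (by exact_mod_cast j.isLt)]

lemma ishift_emod (s : ℤ) (j : Fin (2*k)) :
    ishift k hk (s % ((2*k:ℕ):ℤ)) j = ishift k hk s j := by
  apply Fin.ext; apply @Nat.cast_injective ℤ _
  rw [ishift_val, ishift_val, add_comm ((j:ℕ):ℤ), Int.emod_add_emod, add_comm s]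

end Common
end Stmt17

namespace Stmt17X
open Stmt17

variable (k a : ℕ) (hk : 0 < k)

def theMat (k a : ℕ) : Matrix (Fin (2*k)) (Fin (2*k) ⊕ Fin (2*k)) ℤ :=
  Matrix.fromCols (1 + cycMat (2*k) ^ a) (1 + cycMatZPow (2*k) ((k:ℤ) - 6))

def bexp (k : ℕ) : ℕ := (((k:ℤ) - 6) % ((2*k : ℕ) : ℤ)).toNat

lemma bexp_val (hk : 0 < k) : ((bexp k : ℕ) : ℤ) = ((k:ℤ) - 6) % ((2*k : ℕ) : ℤ) := by
  have hNz : ((2*k : ℕ) : ℤ) ≠ 0 := by exact_mod_cast (by omega : (2*k : ℕ) ≠ 0)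
  exact Int.toNat_of_nonneg (Int.emod_nonneg _ hNz)

lemma zpow_eq : cycMatZPow (2*k) ((k:ℤ) - 6) = cycMat (2*k) ^ (bexp k) := rfl

lemma col_eq (t : ℕ) (j : Fin (2*k)) :
    (fun i => (1 + cycMat (2*k) ^ t) i j) =
      Pi.single j (1:ℤ) + Pi.single (fshift k hk t j) 1 := by
  funext i
  simp only [Matrix.add_apply, Matrix.one_apply, cycMat_pow_apply (2*k) t (by omega),
    Pi.add_apply, Pi.single_apply, fshift, Fin.ext_iff]
  split_ifs <;> omega

abbrev L (k a : ℕ) : Submodule ℤ (Fin (2*k) → ℤ) := LinearMap.range (theMat k a).mulVecLin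

lemma col_mem_left (j : Fin (2*k)) :
    Pi.single j (1:ℤ) + Pi.single (fshift k hk a j) 1 ∈ L k a := by
  refine ⟨Sum.elim (Pi.single j 1) 0, ?_⟩
  rw [Matrix.mulVecLin_apply, theMat, Matrix.fromCols_mulVec_sumElim, Matrix.mulVec_zero,
    add_zero, Matrix.mulVec_single]
  simp only [MulOpposite.op_one, one_smul]
  exact col_eq k hk a j

lemma col_mem_right (j : Fin (2*k)) :
    Pi.single j (1:ℤ) + Pi.single (fshift k hk (bexp k) j) 1 ∈ L k a := by
  refine ⟨Sum.elim 0 (Pi.single j 1), ?_⟩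
  rw [Matrix.mulVecLin_apply, theMat, Matrix.fromCols_mulVec_sumElim, Matrix.mulVec_zero,
    zero_add, zpow_eq, Matrix.mulVec_single]
  simp only [MulOpposite.op_one, one_smul]
  exact col_eq k hk (bexp k) j

def Qe (j : Fin (2*k)) : coker (theMat k a) := Submodule.Quotient.mk (Pi.single j 1)

lemma rel_gen (t : ℕ) (j : Fin (2*k))
    (hmem : Pi.single j (1:ℤ) + Pi.single (fshift k hk t j) 1 ∈ L k a) :
    Qe k a (fshift k hk t j) = - Qe k a j := by
  have h : Qe k a j + Qe k a (fshift k hk t j) = 0 := by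
    show Submodule.Quotient.mk _ + Submodule.Quotient.mk _ = (0 : coker (theMat k a))
    rw [← Submodule.Quotient.mk_add]
    exact (Submodule.Quotient.mk_eq_zero _).2 hmem
  linear_combination (norm := abel) h

lemma rel_a (j : Fin (2*k)) : Qe k a (ishift k hk (a:ℤ) j) = - Qe k a j := by
  rw [ishift_coe]
  exact rel_gen k a hk a j (col_mem_left k a hk j)

lemma rel_b (j : Fin (2*k)) : Qe k a (ishift k hk ((k:ℤ) - 6) j) = - Qe k a j := by
  rw [← ishift_emod, ← bexp_val k hk, ishift_coe]
  exact rel_gen k a hk (bexp k) j (col_mem_right k a hk j)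

/-- the subgroup of shifts preserving classes -/
def GoodSet : AddSubgroup ℤ where
  carrier := {s : ℤ | ∀ j, Qe k a (ishift k hk s j) = Qe k a j}
  zero_mem' := fun j => by rw [ishift_zero]
  add_mem' := by
    intro s t hs ht j
    rw [ishift_add]
    rw [ht (ishift k hk s j), hs j]
  neg_mem' := by
    intro s hs j
    have h1 : ishift k hk s (ishift k hk (-s) j) = j := by
      rw [← ishift_add]; simp [ishift_zero]
    have := hs (ishift k hk (-s) j)
    rw [h1] at this
    exact this.symm

lemma two_a_good : (2 * (a:ℤ)) ∈ GoodSet k a hk := by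
  intro j
  have h : (2 * (a:ℤ)) = (a:ℤ) + (a:ℤ) := by ring
  rw [h, ishift_add, rel_a, rel_a, neg_neg]

lemma kma_good : ((k:ℤ) - 6 - a) ∈ GoodSet k a hk := by
  intro j
  have h : ((k:ℤ) - 6) = ((k:ℤ) - 6 - a) + (a:ℤ) := by ring
  have h2 := rel_b k a hk j
  rw [h, ishift_add, rel_a] at h2
  exact neg_injective h2

lemma good_of_bezout (g : ℕ) (hbez : ∃ u v : ℤ, (g:ℤ) = 2*(a:ℤ)*u + ((k:ℤ)-6-(a:ℤ))*v) :
    ((g:ℕ) : ℤ) ∈ GoodSet k a hk := by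
  obtain ⟨u, v, huv⟩ := hbez
  have : ((g:ℕ):ℤ) = u • (2*(a:ℤ)) + v • ((k:ℤ)-6-(a:ℤ)) := by
    simp only [smul_eq_mul]; linarith [huv]
  rw [this]
  exact AddSubgroup.add_mem _ (AddSubgroup.zsmul_mem _ (two_a_good k a hk) u)
    (AddSubgroup.zsmul_mem _ (kma_good k a hk) v)

end Stmt17X

namespace Stmt17X
open Stmt17

variable (k a : ℕ) (hk : 0 < k)

lemma good_nat_dvd (g t : ℕ) (hgood : ((g:ℕ):ℤ) ∈ GoodSet k a hk) (hgt : g ∣ t) :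
    ((t:ℕ):ℤ) ∈ GoodSet k a hk := by
  obtain ⟨c, rfl⟩ := hgt
  have : (((g*c : ℕ)):ℤ) = (c:ℤ) • ((g:ℕ):ℤ) := by push_cast; rw [smul_eq_mul]; ring
  rw [this]
  exact AddSubgroup.zsmul_mem _ hgood _

lemma Qe_mod (g : ℕ) (hg0 : 0 < g) (hgk : g ≤ 2*k)
    (hgood : ((g:ℕ):ℤ) ∈ GoodSet k a hk) (i : Fin (2*k)) :
    Qe k a i = Qe k a ⟨(i:ℕ) % g, Nat.lt_of_lt_of_le (Nat.mod_lt _ hg0) hgk⟩ := by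
  set r : Fin (2*k) := ⟨(i:ℕ) % g, Nat.lt_of_lt_of_le (Nat.mod_lt _ hg0) hgk⟩ with hr
  have hmem : (((g * ((i:ℕ)/g) : ℕ)):ℤ) ∈ GoodSet k a hk :=
    good_nat_dvd k a hk g _ hgood ⟨_, rfl⟩
  have hi : ishift k hk ((g * ((i:ℕ)/g) : ℕ) : ℤ) r = i := by
    rw [ishift_coe]
    apply Fin.ext
    show ((r:ℕ) + g * ((i:ℕ)/g)) % (2*k) = (i:ℕ)
    have h2 : (r:ℕ) + g * ((i:ℕ)/g) = (i:ℕ) := by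
      show (i:ℕ) % g + g * ((i:ℕ)/g) = (i:ℕ)
      exact Nat.mod_add_div _ _
    rw [h2, Nat.mod_eq_of_lt i.isLt]
  rw [← hi, hmem r]

end Stmt17X

namespace Stmt17X
open Stmt17

variable (k a : ℕ) (hk : 0 < k)

lemma two_Qe (g : ℕ) (hga : g ∣ a) (hgood : ((g:ℕ):ℤ) ∈ GoodSet k a hk)
    (j : Fin (2*k)) : Qe k a j + Qe k a j = 0 := by
  have ha : ((a:ℕ):ℤ) ∈ GoodSet k a hk := good_nat_dvd k a hk g a hgood hga
  have h1 := ha j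
  have h2 := rel_a k a hk j
  rw [h1] at h2
  nth_rewrite 2 [h2]
  exact add_neg_cancel _

/-- residue map -/
def resF (g : ℕ) (hg0 : 0 < g) (i : Fin (2*k)) : Fin g := ⟨(i:ℕ) % g, Nat.mod_lt _ hg0⟩

/-- the linear map to (ZMod 2)^g -/
def phiT (g : ℕ) (hg0 : 0 < g) : (Fin (2*k) → ℤ) →ₗ[ℤ] (Fin g → ZMod 2) where
  toFun v r := ∑ i, if resF k g hg0 i = r then ((v i : ℤ) : ZMod 2) else 0
  map_add' v w := by
    funext r
    rw [Pi.add_apply, ← Finset.sum_add_distrib]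
    refine Finset.sum_congr rfl fun i _ => ?_
    split <;> simp [Pi.add_apply]
  map_smul' c v := by
    funext r
    simp only [RingHom.id_apply, Pi.smul_apply, smul_eq_mul]
    rw [Finset.smul_sum]
    refine Finset.sum_congr rfl fun i _ => ?_
    split
    · rw [zsmul_eq_mul]; push_cast; ring
    · rw [smul_zero]

lemma phiT_single (g : ℕ) (hg0 : 0 < g) (j : Fin (2*k)) (c : ℤ) :
    phiT k g hg0 (Pi.single j c) = fun r => if resF k g hg0 j = r then (c : ZMod 2) else 0 := by
  funext r
  simp only [phiT, LinearMap.coe_mk, AddHom.coe_mk]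
  rw [Finset.sum_eq_single j]
  · rw [Pi.single_eq_same]
  · intro i _ hij
    rw [Pi.single_eq_of_ne hij]
    split <;> simp
  · simp

lemma resF_fshift (g : ℕ) (hg0 : 0 < g) (hgk : g ∣ k) (t : ℕ) (hgt : g ∣ t) (j : Fin (2*k)) :
    resF k g hg0 (fshift k hk t j) = resF k g hg0 j := by
  apply Fin.ext
  show ((j:ℕ) + t) % (2*k) % g = (j:ℕ) % g
  obtain ⟨c, rfl⟩ := hgt
  rw [Nat.mod_mod_of_dvd _ (Dvd.dvd.mul_left hgk 2), Nat.add_mul_mod_self_left]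

lemma phiT_ker (hk' : 0 < k) (g : ℕ) (hg0 : 0 < g) (hgk : g ∣ k) (hga : g ∣ a)
    (hgb : (g:ℤ) ∣ ((k:ℤ) - 6)) :
    L k a ≤ LinearMap.ker (phiT k g hg0) := by
  have hk := hk'
  have hgbexp : g ∣ bexp k := by
    have h2k : ((g:ℕ):ℤ) ∣ ((2*k : ℕ):ℤ) := by
      exact_mod_cast Int.natCast_dvd_natCast.2 (Dvd.dvd.mul_left hgk 2)
    have : ((g:ℕ):ℤ) ∣ ((bexp k : ℕ):ℤ) := by
      rw [bexp_val k hk, Int.emod_def]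
      exact dvd_sub hgb (Dvd.dvd.mul_right h2k _)
    exact_mod_cast this
  have key : ∀ (t : ℕ), g ∣ t → ∀ j : Fin (2*k),
      phiT k g hg0 (Pi.single j (1:ℤ) + Pi.single (fshift k hk t j) 1) = 0 := by
    intro t hgt j
    rw [map_add, phiT_single, phiT_single, resF_fshift k hk g hg0 hgk t hgt]
    funext r
    simp only [Pi.add_apply, Pi.zero_apply]
    split <;> decide
  rw [L, Matrix.range_mulVecLin, Submodule.span_le]
  rintro x ⟨s, rfl⟩
  rcases s with j | j
  · have hx : (theMat k a)ᵀ (Sum.inl j) =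
        Pi.single j (1:ℤ) + Pi.single (fshift k hk a j) 1 := by
      funext i
      rw [Matrix.transpose_apply, theMat, Matrix.fromCols_apply_inl]
      exact congrFun (col_eq k hk a j) i
    rw [SetLike.mem_coe, LinearMap.mem_ker, show (theMat k a).col (Sum.inl j) = (theMat k a)ᵀ (Sum.inl j) from rfl, hx]
    exact key a hga j
  · have hx : (theMat k a)ᵀ (Sum.inr j) =
        Pi.single j (1:ℤ) + Pi.single (fshift k hk (bexp k) j) 1 := by
      funext i
      rw [Matrix.transpose_apply, theMat, Matrix.fromCols_apply_inr, zpow_eq]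
      exact congrFun (col_eq k hk (bexp k) j) i
    rw [SetLike.mem_coe, LinearMap.mem_ker, show (theMat k a).col (Sum.inr j) = (theMat k a)ᵀ (Sum.inr j) from rfl, hx]
    exact key (bexp k) hgbexp j

end Stmt17X

namespace Stmt17X
open Stmt17

/-- index `r < g` viewed in `Fin (2*k)` -/
def emb (k g : ℕ) (hgk2 : g ≤ 2*k) (r : Fin g) : Fin (2*k) :=
  ⟨(r:ℕ), Nat.lt_of_lt_of_le r.isLt hgk2⟩

theorem tor_equiv (k a : ℕ) (hk : 0 < k) (g : ℕ) (hg0 : 0 < g) (hgk : g ∣ k) (hga : g ∣ a)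
    (hgb : (g:ℤ) ∣ ((k:ℤ) - 6))
    (hbez : ∃ u v : ℤ, (g:ℤ) = 2*(a:ℤ)*u + ((k:ℤ)-6-(a:ℤ))*v) :
    Nonempty (coker (theMat k a) ≃+ (Fin g → ZMod 2)) := by
  have hgk2 : g ≤ 2*k := le_trans (Nat.le_of_dvd hk hgk) (by omega)
  have hgood : ((g:ℕ):ℤ) ∈ GoodSet k a hk := good_of_bezout k a hk g hbez
  have h2Qe := two_Qe k a hk g hga hgood
  -- φbar
  set φ := phiT k g hg0 with hφ
  set φbar := (L k a).liftQ φ (phiT_ker k a hk g hg0 hgk hga hgb) with hφbar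
  -- ψ
  have hpsi0 : ∀ r : Fin g, ((zmultiplesHom _ (Qe k a (emb k g hgk2 r))) ((2:ℕ):ℤ)) = 0 := by
    intro r
    rw [zmultiplesHom_apply]
    push_cast
    rw [two_zsmul]
    exact h2Qe _
  set ψr : Fin g → (ZMod 2 →+ coker (theMat k a)) :=
    fun r => ZMod.lift 2 ⟨zmultiplesHom _ (Qe k a (emb k g hgk2 r)), hpsi0 r⟩ with hψr
  have hψr_int : ∀ (r : Fin g) (z : ℤ), ψr r ((z : ZMod 2)) = z • Qe k a (emb k g hgk2 r) := by
    intro r z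
    rw [hψr, ZMod.lift_coe]
    exact zmultiplesHom_apply _ _ _
  -- key computation
  have hQe_single : ∀ (j : Fin (2*k)) (c : ℤ),
      c • Qe k a j = Submodule.Quotient.mk (Pi.single j c) := by
    intro j c
    rw [Qe, ← Submodule.Quotient.mk_smul]
    congr 1
    have := Pi.single_smul (f := fun _ : Fin (2*k) => ℤ) j c (1:ℤ)
    rw [← this, smul_eq_mul, mul_one]
  have key : ∀ (j : Fin (2*k)) (c : ℤ),
      (∑ r, ψr r (φ (Pi.single j c) r)) = Submodule.Quotient.mk (Pi.single j c) := by
    intro j c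
    simp only [hφ, phiT_single]
    rw [Finset.sum_eq_single (resF k g hg0 j)]
    · rw [if_pos rfl, hψr_int]
      have he : emb k g hgk2 (resF k g hg0 j) = ⟨(j:ℕ) % g, Nat.lt_of_lt_of_le (Nat.mod_lt _ hg0) hgk2⟩ := rfl
      rw [he, ← Qe_mod k a hk g hg0 hgk2 hgood j, hQe_single]
    · intro r _ hr
      rw [if_neg (fun h => hr (Fin.ext (congrArg Fin.val h)).symm)]
      exact map_zero _
    · intro h; exact absurd (Finset.mem_univ _) h
  refine ⟨{ toFun := φbar, invFun := fun t => ∑ r, ψr r (t r),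
            map_add' := map_add φbar, left_inv := ?_, right_inv := ?_ }⟩
  · -- left inverse
    intro m
    obtain ⟨v, rfl⟩ := Submodule.Quotient.mk_surjective _ m
    have hv : (Submodule.Quotient.mk v : coker (theMat k a)) =
        ∑ j, Submodule.Quotient.mk (Pi.single j (v j)) := by
      conv_lhs => rw [← Finset.univ_sum_single v]
      rw [show (Submodule.Quotient.mk (∑ j, Pi.single j (v j)) : coker (theMat k a)) =
        (L k a).mkQ (∑ j, Pi.single j (v j)) from rfl, map_sum]
      rfl
    have hφv : φbar (Submodule.Quotient.mk v) = φ v := Submodule.liftQ_apply _ _ _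
    rw [hφv, hv]
    have hveq : v = ∑ j, Pi.single j (v j) := (Finset.univ_sum_single v).symm
    have hφv2 : ∀ r, φ v r = ∑ j, φ (Pi.single j (v j)) r := by
      intro r
      conv_lhs => rw [hveq]
      rw [map_sum]
      exact Finset.sum_apply _ _ _
    calc (∑ r, ψr r (φ v r))
        = ∑ r, ψr r (∑ j, φ (Pi.single j (v j)) r) := by
          congr 1
          funext r
          rw [hφv2]
      _ = ∑ r, ∑ j, ψr r (φ (Pi.single j (v j)) r) := by
          congr 1; funext r; exact map_sum (ψr r) _ _
      _ = ∑ j, ∑ r, ψr r (φ (Pi.single j (v j)) r) := Finset.sum_comm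
      _ = ∑ j, Submodule.Quotient.mk (Pi.single j (v j)) := by
          congr 1; funext j; exact key j (v j)
  · -- right inverse
    intro t
    rw [map_sum φbar]
    have hterm : ∀ r : Fin g, φbar (ψr r (t r)) = fun s => if r = s then t r else 0 := by
      intro r
      obtain ⟨z, hz⟩ := ZMod.intCast_surjective (t r)
      rw [← hz, hψr_int, hQe_single]
      rw [show φbar (Submodule.Quotient.mk (Pi.single (emb k g hgk2 r) z)) =
            φ (Pi.single (emb k g hgk2 r) z) from Submodule.liftQ_apply _ _ _]
      rw [hφ, phiT_single]
      funext s
      have hres : resF k g hg0 (emb k g hgk2 r) = r := by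
        apply Fin.ext
        exact Nat.mod_eq_of_lt r.isLt
      rw [hres]
    calc (∑ r, φbar (ψr r (t r))) = ∑ r, (fun s => if r = s then t r else 0) := by
          congr 1; funext r; exact hterm r
      _ = t := by
          funext s
          rw [Finset.sum_apply]
          rw [Finset.sum_eq_single s]
          · rw [if_pos rfl]
          · intro r _ hr; rw [if_neg hr]
          · intro h; exact absurd (Finset.mem_univ _) h

end Stmt17X

namespace Stmt17X
open Stmt17

variable (k : ℕ)

lemma Qe_smul (a : ℕ) (j : Fin (2*k)) (c : ℤ) :
    c • Qe k a j = Submodule.Quotient.mk (Pi.single j c) := by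
  rw [Qe, ← Submodule.Quotient.mk_smul]
  congr 1
  have := Pi.single_smul (f := fun _ : Fin (2*k) => ℤ) j c (1:ℤ)
  rw [← this, smul_eq_mul, mul_one]

/-- weights for the free case -/
def wF (g h : ℕ) (i : Fin (2*k)) (r : Fin h) : ℤ :=
  if (i:ℕ) % g = (r:ℕ) then 1 else if (i:ℕ) % g = (r:ℕ) + h then -1 else 0

lemma wF_flip (g h : ℕ) (hg : g = 2*h) (h0 : 0 < h) (i j' : Fin (2*k))
    (hres : (j':ℕ) % g = (((i:ℕ) % g) + h) % g) (r : Fin h) :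
    wF k g h j' r = - wF k g h i r := by
  have hg0 : 0 < g := by omega
  have hq : (i:ℕ) % g < g := Nat.mod_lt _ hg0
  have hr := r.isLt
  set q := (i:ℕ) % g with hqdef
  rcases Nat.lt_or_ge q h with hlt | hge
  · have : (q + h) % g = q + h := Nat.mod_eq_of_lt (by omega)
    rw [wF, wF, hres, this]
    split_ifs <;> omega
  · have h1 : (q + h) % g = (q + h - g) % g := Nat.mod_eq_sub_mod (by omega)
    have h2 : (q + h - g) % g = q - h := by
      rw [Nat.mod_eq_of_lt (by omega)]; omega
    rw [wF, wF, hres, h1, h2]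
    split_ifs <;> omega

def phiF (g h : ℕ) : (Fin (2*k) → ℤ) →ₗ[ℤ] (Fin h → ℤ) where
  toFun v r := ∑ i, wF k g h i r * v i
  map_add' v w := by
    funext r
    rw [Pi.add_apply, ← Finset.sum_add_distrib]
    refine Finset.sum_congr rfl fun i _ => ?_
    rw [Pi.add_apply, mul_add]
  map_smul' c v := by
    funext r
    simp only [RingHom.id_apply, Pi.smul_apply, smul_eq_mul]
    rw [Finset.mul_sum]
    refine Finset.sum_congr rfl fun i _ => ?_
    ring

lemma phiF_single (g h : ℕ) (j : Fin (2*k)) (c : ℤ) :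
    phiF k g h (Pi.single j c) = fun r => wF k g h j r * c := by
  funext r
  simp only [phiF, LinearMap.coe_mk, AddHom.coe_mk]
  rw [Finset.sum_eq_single j]
  · rw [Pi.single_eq_same]
  · intro i _ hij
    rw [Pi.single_eq_of_ne hij, mul_zero]
  · simp

lemma res_fshift_h (hk : 0 < k) (g h t : ℕ) (hg0 : 0 < g) (hgk : g ∣ k) (hth : t % g = h)
    (j : Fin (2*k)) :
    ((fshift k hk t j : Fin (2*k)) : ℕ) % g = (((j:ℕ) % g) + h) % g := by
  show ((j:ℕ) + t) % (2*k) % g = _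
  rw [Nat.mod_mod_of_dvd _ (Dvd.dvd.mul_left hgk 2), Nat.add_mod, hth]

lemma bexp_mod (hk : 0 < k) (g h : ℕ) (hg0 : 0 < g) (h0 : 0 < h) (hhg : h < g) (hgk : g ∣ k)
    (hbh : (g:ℤ) ∣ ((k:ℤ) - 6 - h)) : (bexp k) % g = h := by
  have h2k : ((g:ℕ):ℤ) ∣ ((2*k : ℕ):ℤ) := by
    exact_mod_cast Int.natCast_dvd_natCast.2 (Dvd.dvd.mul_left hgk 2)
  have hd : ((g:ℕ):ℤ) ∣ ((bexp k : ℕ):ℤ) - (h:ℕ) := by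
    have e1 : ((bexp k : ℕ):ℤ) - (h:ℕ) =
        (((bexp k : ℕ):ℤ) - ((k:ℤ) - 6)) + (((k:ℤ) - 6) - h) := by ring
    rw [e1]
    refine dvd_add ?_ hbh
    have e2 : ((bexp k : ℕ):ℤ) - ((k:ℤ) - 6) =
        -(((2*k:ℕ):ℤ) * (((k:ℤ)-6)/((2*k:ℕ):ℤ))) := by
      rw [bexp_val k hk, Int.emod_def]; ring
    rw [e2]
    exact dvd_neg.2 (Dvd.dvd.mul_right h2k _)
  have hmod : (((bexp k) % g : ℕ) : ℤ) = ((h % g : ℕ) : ℤ) := by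
    rw [Int.natCast_mod, Int.natCast_mod]
    have hdvd : ((g:ℕ):ℤ) ∣ ((h:ℕ):ℤ) - ((bexp k : ℕ):ℤ) := by
      have h2 := dvd_neg.2 hd
      rw [neg_sub] at h2
      exact h2
    exact Int.modEq_iff_dvd.2 hdvd
  have hfin : (bexp k) % g = h % g := by exact_mod_cast hmod
  rw [hfin, Nat.mod_eq_of_lt hhg]

end Stmt17X

namespace Stmt17X
open Stmt17

lemma phiF_ker (k a : ℕ) (hk : 0 < k) (g h : ℕ) (hg : g = 2*h) (h0 : 0 < h)
    (hgk : g ∣ k) (hah : a % g = h) (hbh : (g:ℤ) ∣ ((k:ℤ) - 6 - h)) :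
    L k a ≤ LinearMap.ker (phiF k g h) := by
  have hg0 : 0 < g := by omega
  have hbexp : (bexp k) % g = h := bexp_mod k hk g h hg0 h0 (by omega) hgk hbh
  have key : ∀ (t : ℕ), t % g = h → ∀ j : Fin (2*k),
      phiF k g h (Pi.single j (1:ℤ) + Pi.single (fshift k hk t j) 1) = 0 := by
    intro t hth j
    rw [map_add, phiF_single, phiF_single]
    funext r
    have hres := res_fshift_h k hk g h t hg0 hgk hth j
    rw [Pi.add_apply, Pi.zero_apply, wF_flip k g h hg h0 j (fshift k hk t j) hres r]
    ring
  rw [L, Matrix.range_mulVecLin, Submodule.span_le]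
  rintro x ⟨s, rfl⟩
  rcases s with j | j
  · have hx : (theMat k a)ᵀ (Sum.inl j) =
        Pi.single j (1:ℤ) + Pi.single (fshift k hk a j) 1 := by
      funext i
      rw [Matrix.transpose_apply, theMat, Matrix.fromCols_apply_inl]
      exact congrFun (col_eq k hk a j) i
    rw [SetLike.mem_coe, LinearMap.mem_ker, show (theMat k a).col (Sum.inl j) = (theMat k a)ᵀ (Sum.inl j) from rfl, hx]
    exact key a hah j
  · have hx : (theMat k a)ᵀ (Sum.inr j) =
        Pi.single j (1:ℤ) + Pi.single (fshift k hk (bexp k) j) 1 := by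
      funext i
      rw [Matrix.transpose_apply, theMat, Matrix.fromCols_apply_inr, zpow_eq]
      exact congrFun (col_eq k hk (bexp k) j) i
    rw [SetLike.mem_coe, LinearMap.mem_ker, show (theMat k a).col (Sum.inr j) = (theMat k a)ᵀ (Sum.inr j) from rfl, hx]
    exact key (bexp k) hbexp j

lemma rel_h (k a : ℕ) (hk : 0 < k) (g h : ℕ) (hah : a % g = h) (hg0 : 0 < g)
    (hgood : ((g:ℕ):ℤ) ∈ GoodSet k a hk) (j : Fin (2*k)) :
    Qe k a (fshift k hk h j) = - Qe k a j := by
  have hdm := Nat.div_add_mod a g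
  have hsplit : ((a:ℕ):ℤ) = ((h:ℕ):ℤ) + ((g*(a/g) : ℕ):ℤ) := by
    rw [← Nat.cast_add]
    exact_mod_cast congrArg (Nat.cast : ℕ → ℤ) (by omega : a = h + g*(a/g))
  have h1 := rel_a k a hk j
  rw [hsplit, ishift_add] at h1
  have h2 : ((g*(a/g) : ℕ):ℤ) ∈ GoodSet k a hk :=
    good_nat_dvd k a hk g _ hgood ⟨_, rfl⟩
  rw [h2 (ishift k hk ((h:ℕ):ℤ) j)] at h1
  rw [ishift_coe] at h1
  exact h1

theorem free_equiv (k a : ℕ) (hk : 0 < k) (g h : ℕ) (hg : g = 2*h) (h0 : 0 < h)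
    (hgk : g ∣ k) (hah : a % g = h) (hbh : (g:ℤ) ∣ ((k:ℤ) - 6 - h))
    (hbez : ∃ u v : ℤ, (g:ℤ) = 2*(a:ℤ)*u + ((k:ℤ)-6-(a:ℤ))*v) :
    Nonempty (coker (theMat k a) ≃+ (Fin h → ℤ)) := by
  have hg0 : 0 < g := by omega
  have hgk2 : g ≤ 2*k := le_trans (Nat.le_of_dvd hk hgk) (by omega)
  have hhk2 : h ≤ 2*k := by omega
  have hgood : ((g:ℕ):ℤ) ∈ GoodSet k a hk := good_of_bezout k a hk g hbez
  set φ := phiF k g h with hφ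
  set φbar := (L k a).liftQ φ (phiF_ker k a hk g h hg h0 hgk hah hbh) with hφbar
  set em : Fin h → Fin (2*k) := emb k h hhk2 with hem
  -- key computation
  have key : ∀ (j : Fin (2*k)) (c : ℤ),
      (∑ r, (wF k g h j r * c) • Qe k a (em r)) = Submodule.Quotient.mk (Pi.single j c) := by
    intro j c
    have hq : (j:ℕ) % g < g := Nat.mod_lt _ hg0
    have hQmod := Qe_mod k a hk g hg0 hgk2 hgood j
    rcases Nat.lt_or_ge ((j:ℕ) % g) h with hlt | hge
    · set r0 : Fin h := ⟨(j:ℕ) % g, hlt⟩ with hr0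
      rw [Finset.sum_eq_single r0]
      · have hw : wF k g h j r0 = 1 := by
          rw [wF, if_pos rfl]
        rw [hw, one_mul]
        have : em r0 = ⟨(j:ℕ) % g, Nat.lt_of_lt_of_le hq hgk2⟩ := rfl
        rw [this, ← hQmod, Qe_smul]
      · intro r _ hr
        have hw : wF k g h j r = 0 := by
          rw [wF, if_neg, if_neg]
          · have := r.isLt; omega
          · intro hcon
            exact hr (Fin.ext hcon.symm)
        rw [hw, zero_mul, zero_smul]
      · intro hcon; exact absurd (Finset.mem_univ _) hcon
    · set r0 : Fin h := ⟨(j:ℕ) % g - h, by omega⟩ with hr0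
      rw [Finset.sum_eq_single r0]
      · have hw : wF k g h j r0 = -1 := by
          rw [wF, if_neg (by simp [hr0]; omega), if_pos (by simp [hr0]; omega)]
        rw [hw]
        have hflip : Qe k a (⟨(j:ℕ) % g, Nat.lt_of_lt_of_le hq hgk2⟩ : Fin (2*k)) =
            - Qe k a (em r0) := by
          have hfs : fshift k hk h (em r0) = ⟨(j:ℕ) % g, Nat.lt_of_lt_of_le hq hgk2⟩ := by
            apply Fin.ext
            show ((j:ℕ) % g - h + h) % (2*k) = (j:ℕ) % g
            rw [Nat.sub_add_cancel hge]
            exact Nat.mod_eq_of_lt (by omega)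
          rw [← hfs]
          exact rel_h k a hk g h hah hg0 hgood (em r0)
        rw [← Qe_smul k a j c, hQmod, hflip, smul_neg, neg_one_mul, neg_smul]
      · intro r _ hr
        have hw : wF k g h j r = 0 := by
          rw [wF, if_neg (by have := r.isLt; omega), if_neg]
          intro hcon
          exact hr (Fin.ext (show (r:ℕ) = (j:ℕ) % g - h by omega))
        rw [hw, zero_mul, zero_smul]
      · intro hcon; exact absurd (Finset.mem_univ _) hcon
  refine ⟨{ toFun := φbar, invFun := fun t => ∑ r, (t r) • Qe k a (em r),
            map_add' := map_add φbar, left_inv := ?_, right_inv := ?_ }⟩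
  · intro m
    obtain ⟨v, rfl⟩ := Submodule.Quotient.mk_surjective _ m
    have hφv : φbar (Submodule.Quotient.mk v) = φ v := Submodule.liftQ_apply _ _ _
    rw [hφv]
    have hveq : v = ∑ j, Pi.single j (v j) := (Finset.univ_sum_single v).symm
    have hv : (Submodule.Quotient.mk v : coker (theMat k a)) =
        ∑ j, Submodule.Quotient.mk (Pi.single j (v j)) := by
      conv_lhs => rw [← Finset.univ_sum_single v]
      rw [show (Submodule.Quotient.mk (∑ j, Pi.single j (v j)) : coker (theMat k a)) =
        (L k a).mkQ (∑ j, Pi.single j (v j)) from rfl, map_sum]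
      rfl
    rw [hv]
    have hφv2 : ∀ r, φ v r = ∑ j, φ (Pi.single j (v j)) r := by
      intro r
      conv_lhs => rw [hveq]
      rw [map_sum]
      exact Finset.sum_apply _ _ _
    calc (∑ r, (φ v r) • Qe k a (em r))
        = ∑ r, ∑ j, (φ (Pi.single j (v j)) r) • Qe k a (em r) := by
          refine Finset.sum_congr rfl fun r _ => ?_
          rw [hφv2, Finset.sum_smul]
      _ = ∑ j, ∑ r, (φ (Pi.single j (v j)) r) • Qe k a (em r) := Finset.sum_comm
      _ = ∑ j, Submodule.Quotient.mk (Pi.single j (v j)) := by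
          refine Finset.sum_congr rfl fun j _ => ?_
          have hps : ∀ r, φ (Pi.single j (v j)) r = wF k g h j r * (v j) := by
            intro r
            rw [hφ, phiF_single]
          calc (∑ r, (φ (Pi.single j (v j)) r) • Qe k a (em r))
              = ∑ r, (wF k g h j r * (v j)) • Qe k a (em r) := by
                refine Finset.sum_congr rfl fun r _ => ?_
                rw [hps]
            _ = Submodule.Quotient.mk (Pi.single j (v j)) := key j (v j)
  · intro t
    have hterm : ∀ r : Fin h, φbar ((t r) • Qe k a (em r)) =
        fun s : Fin h => if (r:ℕ) = (s:ℕ) then t r else 0 := by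
      intro r
      rw [Qe_smul]
      rw [show φbar (Submodule.Quotient.mk (Pi.single (em r) (t r))) =
            φ (Pi.single (em r) (t r)) from Submodule.liftQ_apply _ _ _]
      rw [hφ, phiF_single]
      funext s
      have hrs : ((em r : Fin (2*k)) : ℕ) % g = (r:ℕ) := by
        show (r:ℕ) % g = (r:ℕ)
        exact Nat.mod_eq_of_lt (by have := r.isLt; omega)
      rw [wF, hrs]
      have := s.isLt
      split_ifs <;> [rw [one_mul]; (exfalso; omega); rw [zero_mul]] <;> omega
    rw [map_sum φbar]
    calc (∑ r, φbar ((t r) • Qe k a (em r)))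
        = ∑ r : Fin h, (fun s : Fin h => if (r:ℕ) = (s:ℕ) then t r else 0) := by
          refine Finset.sum_congr rfl fun r _ => hterm r
      _ = t := by
          funext s
          rw [Finset.sum_apply, Finset.sum_eq_single s]
          · rw [if_pos rfl]
          · intro r _ hr
            rw [if_neg (fun hc => hr (Fin.ext hc))]
          · intro hcon; exact absurd (Finset.mem_univ _) hcon

end Stmt17X


open Stmt17 Stmt17X in
theorem stmt_17 (k : ℕ) (hk : 1 ≤ k) (d : ℕ) (hd : d = Nat.gcd 12 k) :
    (d = 1 ∨ d = 2 ∨ d = 3 ∨ d = 6 → Nonempty (coker (Matrix.fromCols (1 + cycMat (2 * k) ^ 6)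
        (1 + cycMatZPow (2 * k) ((k : ℤ) - 6))) ≃+ (Fin d → ZMod 2))) ∧
    (d = 4 ∨ d = 12 → Nonempty (coker (Matrix.fromCols (1 + cycMat (2 * k) ^ 6)
        (1 + cycMatZPow (2 * k) ((k : ℤ) - 6))) ≃+ (Fin (d / 2) → ℤ))) ∧
    (d = 1 ∨ d = 3 → Nonempty (coker (Matrix.fromCols (1 + cycMat (2 * k) ^ 2)
        (1 + cycMatZPow (2 * k) ((k : ℤ) - 6))) ≃+ ZMod 2)) ∧
    (d = 2 ∨ d = 6 → Nonempty (coker (Matrix.fromCols (1 + cycMat (2 * k) ^ 2)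
        (1 + cycMatZPow (2 * k) ((k : ℤ) - 6))) ≃+ (Fin 2 → ZMod 2))) ∧
    (d = 4 ∨ d = 12 → Nonempty (coker (Matrix.fromCols (1 + cycMat (2 * k) ^ 2)
        (1 + cycMatZPow (2 * k) ((k : ℤ) - 6))) ≃+ (Fin 2 → ℤ))) := by
  have hk0 : 0 < k := hk
  have hdk : d ∣ k := hd ▸ Nat.gcd_dvd_right 12 k
  have hd12 : d ∣ 12 := hd ▸ Nat.gcd_dvd_left 12 k
  -- Bezout for 12, k
  have hbez12 : ∃ u v : ℤ, (d:ℤ) = 2*((6:ℕ):ℤ)*u + ((k:ℤ)-6-((6:ℕ):ℤ))*v := by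
    refine ⟨Nat.gcdA 12 k + Nat.gcdB 12 k, Nat.gcdB 12 k, ?_⟩
    have hb := Nat.gcd_eq_gcd_ab 12 k
    rw [hd]
    push_cast [hb]
    push_cast at hb
    linarith [hb]
  refine ⟨?_, ?_, ?_, ?_, ?_⟩
  · -- d ∈ {1,2,3,6}, torsion, a = 6
    intro hcase
    have hd6 : d ∣ 6 := by rcases hcase with h|h|h|h <;> subst h <;> norm_num
    have hd0 : 0 < d := by omega
    have hdk6 : (d:ℤ) ∣ ((k:ℤ) - 6) := by
      have h1 : (d:ℤ) ∣ (k:ℤ) := Int.natCast_dvd_natCast.2 hdk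
      have h2 : (d:ℤ) ∣ (6:ℤ) := by exact_mod_cast Int.natCast_dvd_natCast.2 hd6
      exact dvd_sub h1 h2
    exact tor_equiv k 6 hk0 d hd0 hdk hd6 hdk6 hbez12
  · -- d ∈ {4,12}, free, a = 6, g = d, h = d/2
    intro hcase
    have hg : d = 2*(d/2) := by rcases hcase with h|h <;> subst h <;> norm_num
    have h0 : 0 < d/2 := by rcases hcase with h|h <;> subst h <;> norm_num
    have hah : 6 % d = d/2 := by rcases hcase with h|h <;> subst h <;> norm_num
    have hbh : (d:ℤ) ∣ ((k:ℤ) - 6 - (d/2 : ℕ)) := by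
      have h1 : (d:ℤ) ∣ (k:ℤ) := Int.natCast_dvd_natCast.2 hdk
      rcases hcase with h|h
      · subst h
        have he : ((k:ℤ) - 6 - ((4/2 : ℕ):ℤ)) = (k:ℤ) + (4:ℤ)*(-2) := by push_cast; ring
        rw [he]
        exact dvd_add (by exact_mod_cast h1) ⟨-2, by norm_num⟩
      · subst h
        have he : ((k:ℤ) - 6 - ((12/2 : ℕ):ℤ)) = (k:ℤ) + (12:ℤ)*(-1) := by push_cast; ring
        rw [he]
        exact dvd_add (by exact_mod_cast h1) ⟨-1, by norm_num⟩
    exact free_equiv k 6 hk0 d (d/2) hg h0 hdk hah hbh hbez12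
  · -- d ∈ {1,3}: torsion with a = 2, g = 1, then Fin 1 → ZMod 2 ≃ ZMod 2
    intro hcase
    have hodd : ¬ 2 ∣ k := by
      intro h2k
      have : 2 ∣ d := hd ▸ Nat.dvd_gcd (by norm_num) h2k
      rcases hcase with h|h <;> omega
    have hg1 : Nat.gcd 4 k = 1 := by
      have h1 := Nat.gcd_dvd_left 4 k
      have h2 := Nat.gcd_dvd_right 4 k
      have h3 : Nat.gcd 4 k ≤ 4 := Nat.le_of_dvd (by norm_num) h1
      have h4 : 0 < Nat.gcd 4 k := Nat.gcd_pos_of_pos_left _ (by norm_num)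
      interval_cases h : (Nat.gcd 4 k) <;> omega
    have hbez : ∃ u v : ℤ, ((1:ℕ):ℤ) = 2*((2:ℕ):ℤ)*u + ((k:ℤ)-6-((2:ℕ):ℤ))*v := by
      refine ⟨Nat.gcdA 4 k + 2 * Nat.gcdB 4 k, Nat.gcdB 4 k, ?_⟩
      have hb := Nat.gcd_eq_gcd_ab 4 k
      rw [hg1] at hb
      push_cast at hb ⊢
      linarith [hb]
    obtain ⟨e⟩ := tor_equiv k 2 hk0 1 (by norm_num) (one_dvd _) (one_dvd _) (one_dvd _) hbez
    exact ⟨e.trans (AddEquiv.piUnique (fun _ : Fin 1 => ZMod 2))⟩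
  · -- d ∈ {2,6}: torsion with a = 2, g = 2
    intro hcase
    have h2d : 2 ∣ d := by rcases hcase with h|h <;> omega
    have h2k : 2 ∣ k := dvd_trans h2d hdk
    have hn4 : ¬ 4 ∣ k := by
      intro h4k
      have : 4 ∣ d := hd ▸ Nat.dvd_gcd (by norm_num) h4k
      rcases hcase with h|h <;> omega
    have hg2 : Nat.gcd 4 k = 2 := by
      have h1 := Nat.gcd_dvd_left 4 k
      have h2 := Nat.gcd_dvd_right 4 k
      have h5 : 2 ∣ Nat.gcd 4 k := Nat.dvd_gcd (by norm_num) h2k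
      have h3 : Nat.gcd 4 k ≤ 4 := Nat.le_of_dvd (by norm_num) h1
      have h4 : 0 < Nat.gcd 4 k := Nat.gcd_pos_of_pos_left _ (by norm_num)
      interval_cases h : (Nat.gcd 4 k) <;> omega
    have hbez : ∃ u v : ℤ, ((2:ℕ):ℤ) = 2*((2:ℕ):ℤ)*u + ((k:ℤ)-6-((2:ℕ):ℤ))*v := by
      refine ⟨Nat.gcdA 4 k + 2 * Nat.gcdB 4 k, Nat.gcdB 4 k, ?_⟩
      have hb := Nat.gcd_eq_gcd_ab 4 k
      rw [hg2] at hb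
      push_cast at hb ⊢
      linarith [hb]
    have h2k6 : ((2:ℕ):ℤ) ∣ ((k:ℤ) - 6) := by
      have : ((2:ℕ):ℤ) ∣ (k:ℤ) := by exact_mod_cast Int.natCast_dvd_natCast.2 h2k
      exact dvd_sub this (by norm_num)
    exact tor_equiv k 2 hk0 2 (by norm_num) h2k (by norm_num) h2k6 hbez
  · -- d ∈ {4,12}: free with a = 2, g = 4, h = 2
    intro hcase
    have h4d : 4 ∣ d := by rcases hcase with h|h <;> omega
    have h4k : 4 ∣ k := dvd_trans h4d hdk
    have hg4 : Nat.gcd 4 k = 4 := Nat.gcd_eq_left h4k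
    have hbez : ∃ u v : ℤ, ((4:ℕ):ℤ) = 2*((2:ℕ):ℤ)*u + ((k:ℤ)-6-((2:ℕ):ℤ))*v := by
      refine ⟨Nat.gcdA 4 k + 2 * Nat.gcdB 4 k, Nat.gcdB 4 k, ?_⟩
      have hb := Nat.gcd_eq_gcd_ab 4 k
      rw [hg4] at hb
      push_cast at hb ⊢
      linarith [hb]
    have hbh : ((4:ℕ):ℤ) ∣ ((k:ℤ) - 6 - ((2:ℕ):ℤ)) := by
      have h1 : ((4:ℕ):ℤ) ∣ (k:ℤ) := by exact_mod_cast Int.natCast_dvd_natCast.2 h4k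
      have : ((k:ℤ) - 6 - ((2:ℕ):ℤ)) = (k:ℤ) + ((4:ℕ):ℤ)*(-2) := by push_cast; ring
      rw [this]
      exact dvd_add h1 ⟨-2, rfl⟩
    exact free_equiv k 2 hk0 4 2 (by norm_num) (by norm_num) h4k (by norm_num) hbh hbez
end

section
/- Let k ≥ 1 be an integer and put d = gcd(30, k). Then Coker ((1_k − X_k + X_k^{2})·(1_k + X_k^{5})) ≅ (ℤ/2ℤ)^{d} if d ∈ {1, 3, 5}; ≅ (ℤ/2ℤ)^{7} if d = 15; ≅ ℤ^{d/2} if d ∈ {2, 6, 10}; and ≅ ℤ^{7} if d = 30. -/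
open Matrix Polynomial

section Reduction

noncomputable section

def fpol : ℤ[X] := (1 - X + X ^ 2) * (1 + X ^ 5)

lemma fpol_dvd : fpol ∣ (X : ℤ[X]) ^ 30 - 1 :=
  ⟨-1 - X + X ^ 3 + X ^ 4 + X ^ 5 - X ^ 7 - X ^ 8 + X ^ 15 + X ^ 16 - X ^ 18 - X ^ 19
      - X ^ 20 + X ^ 22 + X ^ 23, by unfold fpol; ring⟩

def gpol (k : ℕ) : ℤ[X] := X ^ k - 1

lemma gpol_monic {k : ℕ} (hk : k ≠ 0) : (gpol k).Monic := by
  simpa [gpol] using Polynomial.monic_X_pow_sub_C (1 : ℤ) hk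

lemma gpol_natDegree (k : ℕ) : (gpol k).natDegree = k := by
  simpa [gpol] using Polynomial.natDegree_X_pow_sub_C (n := k) (r := (1 : ℤ))

abbrev Rg (k : ℕ) := AdjoinRoot (gpol k)

def rt (k : ℕ) : Rg k := AdjoinRoot.root (gpol k)

lemma rt_pow (k : ℕ) : rt k ^ k = 1 := by
  have h : AdjoinRoot.mk (gpol k) (gpol k) = 0 := AdjoinRoot.mk_self
  rw [gpol, map_sub, map_pow, AdjoinRoot.mk_X, _root_.map_one, sub_eq_zero] at h
  exact h

lemma rt_pow_mod (k : ℕ) (hk : k ≠ 0) (n : ℕ) : rt k ^ (n % k) = rt k ^ n := by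
  conv_rhs => rw [← Nat.div_add_mod n k]
  rw [pow_add, pow_mul, rt_pow, one_pow, one_mul]

def bas (k : ℕ) (hk : k ≠ 0) : Module.Basis (Fin k) ℤ (Rg k) :=
  ((AdjoinRoot.powerBasis' (gpol_monic hk)).basis).reindex
    (finCongr (by rw [AdjoinRoot.powerBasis'_dim, gpol_natDegree]))

lemma bas_apply (k : ℕ) (hk : k ≠ 0) (i : Fin k) : bas k hk i = rt k ^ (i : ℕ) := by
  rw [bas, Module.Basis.reindex_apply, PowerBasis.basis_eq_pow]
  rfl

def eqv (k : ℕ) (hk : k ≠ 0) : (Fin k → ℤ) ≃ₗ[ℤ] Rg k := (bas k hk).equivFun.symm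

lemma eqv_single (k : ℕ) (hk : k ≠ 0) (i : Fin k) :
    eqv k hk (Pi.single i 1) = rt k ^ (i : ℕ) := by
  rw [eqv, Module.Basis.equivFun_symm_apply, Fintype.sum_eq_single i]
  · rw [Pi.single_eq_same, one_smul, bas_apply]
  · intro j hj
    rw [Pi.single_eq_of_ne hj, zero_smul]

lemma eqv_cyc (k : ℕ) (hk : k ≠ 0) (v : Fin k → ℤ) :
    eqv k hk ((cycMat k).mulVec v) = rt k * eqv k hk v := by
  have hk0 : 0 < k := Nat.pos_of_ne_zero hk
  have key : ((eqv k hk).toLinearMap.comp (cycMat k).mulVecLin) =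
      (LinearMap.mulLeft ℤ (rt k)).comp (eqv k hk).toLinearMap := by
    apply (Pi.basisFun ℤ (Fin k)).ext
    intro j
    simp only [LinearMap.comp_apply, Pi.basisFun_apply, LinearEquiv.coe_coe,
      Matrix.mulVecLin_apply, LinearMap.mulLeft_apply]
    have hcol : (cycMat k).mulVec (Pi.single j 1) =
        Pi.single (⟨((j : ℕ) + 1) % k, Nat.mod_lt _ hk0⟩ : Fin k) 1 := by
      funext i
      simp only [Matrix.mulVec_single_one, Matrix.col_apply, mul_one, cycMat, Matrix.of_apply, Pi.single_apply]
      by_cases hij : ((j : ℕ) + 1) % k = (i : ℕ)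
      · rw [if_pos hij, if_pos (Fin.ext hij.symm)]
      · rw [if_neg hij, if_neg (fun hc => hij (congrArg Fin.val hc).symm)]
    rw [hcol, eqv_single, eqv_single, rt_pow_mod k hk, pow_succ, mul_comm]
  simpa using LinearMap.congr_fun key v

def ck (k : ℕ) : Rg k := (1 - rt k + rt k ^ 2) * (1 + rt k ^ 5)

lemma eqv_M (k : ℕ) (hk : k ≠ 0) (v : Fin k → ℤ) :
    eqv k hk (((1 - cycMat k + cycMat k ^ 2) * (1 + cycMat k ^ 5)).mulVec v)
      = ck k * eqv k hk v := by
  have hpow : ∀ (n : ℕ) (w : Fin k → ℤ),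
      eqv k hk ((cycMat k ^ n).mulVec w) = rt k ^ n * eqv k hk w := by
    intro n
    induction n with
    | zero => intro w; rw [pow_zero, pow_zero, Matrix.one_mulVec, one_mul]
    | succ n ih =>
      intro w
      rw [pow_succ, ← Matrix.mulVec_mulVec, ih, eqv_cyc k hk, pow_succ]
      ring
  have hsplit : ∀ w, eqv k hk ((1 - cycMat k + cycMat k ^ 2).mulVec w)
      = (1 - rt k + rt k ^ 2) * eqv k hk w := by
    intro w
    rw [Matrix.add_mulVec, Matrix.sub_mulVec, Matrix.one_mulVec, map_add, map_sub,
      eqv_cyc k hk, hpow 2]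
    ring
  have hsplit2 : eqv k hk ((1 + cycMat k ^ 5).mulVec v) = (1 + rt k ^ 5) * eqv k hk v := by
    rw [Matrix.add_mulVec, Matrix.one_mulVec, map_add, hpow 5]
    ring
  rw [← Matrix.mulVec_mulVec, hsplit, hsplit2, ck]
  ring

lemma range_eq (k : ℕ) (hk : k ≠ 0) :
    (LinearMap.range ((1 - cycMat k + cycMat k ^ 2) * (1 + cycMat k ^ 5)).mulVecLin).map
        (eqv k hk).toLinearMap
      = (Ideal.span {ck k}).restrictScalars ℤ := by
  ext x
  simp only [Submodule.mem_map, LinearMap.mem_range, Submodule.restrictScalars_mem,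
    Ideal.mem_span_singleton, Matrix.mulVecLin_apply, LinearEquiv.coe_coe]
  constructor
  · rintro ⟨y, ⟨v, rfl⟩, rfl⟩
    exact Dvd.intro _ (eqv_M k hk v).symm
  · rintro ⟨a, rfl⟩
    refine ⟨((1 - cycMat k + cycMat k ^ 2) * (1 + cycMat k ^ 5)).mulVec ((eqv k hk).symm a),
      ⟨_, rfl⟩, ?_⟩
    rw [eqv_M k hk, LinearEquiv.apply_symm_apply]

def cokerToPoly (k : ℕ) (hk : k ≠ 0) :
    coker ((1 - cycMat k + cycMat k ^ 2) * (1 + cycMat k ^ 5)) ≃+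
      (ℤ[X] ⧸ (Ideal.span {gpol k} ⊔ Ideal.span {fpol})) := by
  have hmap : (Ideal.span {ck k} : Ideal (ℤ[X] ⧸ Ideal.span {gpol k}))
      = (Ideal.span {fpol}).map (Ideal.Quotient.mk (Ideal.span {gpol k})) := by
    have hck : ck k = AdjoinRoot.mk (gpol k) fpol := by
      simp only [ck, fpol, _root_.map_mul, map_add, map_sub, _root_.map_one, map_pow,
        AdjoinRoot.mk_X, rt]
    rw [Ideal.map_span, Set.image_singleton, hck]
    all_goals rfl
  exact (((Submodule.Quotient.equiv _ _ (eqv k hk) (range_eq k hk)).trans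
      (Submodule.Quotient.restrictScalarsEquiv ℤ
        ((Ideal.span {ck k} : Ideal (Rg k)) : Submodule (Rg k) (Rg k)))).toAddEquiv).trans
    (((Ideal.quotEquivOfEq hmap).trans
      (DoubleQuot.quotQuotEquivQuotSup (Ideal.span {gpol k}) (Ideal.span {fpol}))).toAddEquiv)

lemma bezout (k : ℕ) (hk : k ≠ 0) : ∃ a m : ℕ, a * k = Nat.gcd 30 k + 30 * m := by
  have hb := Nat.gcd_eq_gcd_ab 30 k
  push_cast at hb
  set u := Nat.gcdA 30 k with hu
  set v := Nat.gcdB 30 k with hv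
  set N : ℕ := u.natAbs + v.natAbs + 1 with hN
  have hNv : (0 : ℤ) ≤ v + 30 * N := by
    have h1 : (N : ℤ) = (u.natAbs : ℤ) + (v.natAbs : ℤ) + 1 := by rw [hN]; push_cast; ring
    omega
  have hk1 : (1 : ℤ) ≤ (k : ℤ) := by exact_mod_cast Nat.one_le_iff_ne_zero.mpr hk
  have hNm : (0 : ℤ) ≤ (N : ℤ) * k - u := by
    have h1 : u ≤ (u.natAbs : ℤ) := Int.le_natAbs
    have h2 : (u.natAbs : ℤ) ≤ (N : ℤ) := by
      have h3 : (N : ℤ) = (u.natAbs : ℤ) + (v.natAbs : ℤ) + 1 := by rw [hN]; push_cast; ring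
      omega
    have h3 : (N : ℤ) ≤ (N : ℤ) * k := le_mul_of_one_le_right (by positivity) hk1
    linarith
  refine ⟨(v + 30 * N).toNat, ((N : ℤ) * k - u).toNat, ?_⟩
  have h1 : ((v + 30 * N).toNat : ℤ) = v + 30 * N := Int.toNat_of_nonneg hNv
  have h2 : (((N : ℤ) * k - u).toNat : ℤ) = (N : ℤ) * k - u := Int.toNat_of_nonneg hNm
  have key : (((v + 30 * N).toNat * k : ℕ) : ℤ)
      = ((Nat.gcd 30 k : ℤ) + 30 * (((N : ℤ) * k - u).toNat : ℤ)) := by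
    rw [Nat.cast_mul, h1, h2]
    linear_combination -hb
  exact_mod_cast key

lemma span_eq (k : ℕ) (hk : k ≠ 0) :
    Ideal.span {gpol k} ⊔ Ideal.span {fpol}
      = Ideal.span {gpol (Nat.gcd 30 k)} ⊔ Ideal.span {fpol} := by
  have hpair : ∀ p : ℤ[X], Ideal.span {p} ⊔ Ideal.span {fpol}
      = Ideal.span ({p, fpol} : Set ℤ[X]) := fun p => (Ideal.span_insert p {fpol}).symm
  rw [hpair, hpair]
  set d := Nat.gcd 30 k with hd
  obtain ⟨t, ht⟩ := Nat.gcd_dvd_right 30 k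
  obtain ⟨a, m, ham⟩ := bezout k hk
  apply le_antisymm
  · rw [Ideal.span_le]
    rintro x hx
    simp only [Set.mem_insert_iff, Set.mem_singleton_iff] at hx
    rcases hx with rfl | rfl
    · have hdvd : gpol d ∣ gpol k := by
        have h0 := sub_dvd_pow_sub_pow ((X : ℤ[X]) ^ d) 1 t
        rw [← pow_mul, one_pow, ← ht] at h0
        simpa [gpol] using h0
      obtain ⟨c, hc⟩ := hdvd
      exact Ideal.mem_span_pair.mpr ⟨c, 0, by rw [hc]; ring⟩
    · exact Ideal.mem_span_pair.mpr ⟨0, 1, by ring⟩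
  · rw [Ideal.span_le]
    rintro x hx
    simp only [Set.mem_insert_iff, Set.mem_singleton_iff] at hx
    rcases hx with rfl | rfl
    · have h1 : gpol k ∣ (X : ℤ[X]) ^ (a * k) - 1 := by
        have h0 := sub_dvd_pow_sub_pow ((X : ℤ[X]) ^ k) 1 a
        rw [← pow_mul, one_pow] at h0
        simpa [gpol, mul_comm] using h0
      have h2 : fpol ∣ (X : ℤ[X]) ^ (30 * m) - 1 := by
        refine fpol_dvd.trans ?_
        have h0 := sub_dvd_pow_sub_pow ((X : ℤ[X]) ^ 30) 1 m
        rwa [← pow_mul, one_pow] at h0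
      obtain ⟨cu, hcu⟩ := h1
      obtain ⟨cw, hcw⟩ := h2
      refine Ideal.mem_span_pair.mpr ⟨cu, -((X : ℤ[X]) ^ d * cw), ?_⟩
      have hak : (X : ℤ[X]) ^ (a * k) = X ^ d * X ^ (30 * m) := by
        rw [ham, pow_add]
      calc cu * gpol k + -((X : ℤ[X]) ^ d * cw) * fpol
          = ((X : ℤ[X]) ^ (a * k) - 1) - X ^ d * ((X : ℤ[X]) ^ (30 * m) - 1) := by
            rw [hcu, hcw]; ring
        _ = gpol d := by rw [hak, gpol]; ring
    · exact Ideal.mem_span_pair.mpr ⟨0, 1, by ring⟩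

def cokerEquivGcd (k : ℕ) (hk : k ≠ 0) :
    coker ((1 - cycMat k + cycMat k ^ 2) * (1 + cycMat k ^ 5)) ≃+
      coker ((1 - cycMat (Nat.gcd 30 k) + cycMat (Nat.gcd 30 k) ^ 2)
        * (1 + cycMat (Nat.gcd 30 k) ^ 5)) := by
  have hd : Nat.gcd 30 k ≠ 0 := (Nat.gcd_pos_of_pos_left k (by norm_num)).ne'
  exact ((cokerToPoly k hk).trans
    (Ideal.quotEquivOfEq (span_eq k hk)).toAddEquiv).trans (cokerToPoly (Nat.gcd 30 k) hd).symm

end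

end Reduction


noncomputable def quotSpanMonicEquivPi {R : Type} [CommRing R] (h : R[X]) (hm : h.Monic)
    (t : ℕ) (hdeg : h.natDegree = t) :
    (R[X] ⧸ Ideal.span ({h} : Set R[X])) ≃+ (Fin t → R) :=
  (((AdjoinRoot.powerBasis' hm).basis.reindex
      (finCongr (by rw [AdjoinRoot.powerBasis'_dim, hdeg]))).equivFun :
    AdjoinRoot h ≃ₗ[R] (Fin t → R)).toAddEquiv

noncomputable def quotSpanTwoEquiv (w : ℤ[X]) (w2 : (ZMod 2)[X])
    (hw2 : w.map (Int.castRingHom (ZMod 2)) = w2) (hm : w2.Monic) (t : ℕ)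
    (hdeg : w2.natDegree = t) :
    (ℤ[X] ⧸ Ideal.span ({2, w} : Set ℤ[X])) ≃+ (Fin t → ZMod 2) := by
  have h1 : Ideal.span ({2, w} : Set ℤ[X]) = Ideal.span {(2 : ℤ[X])} ⊔ Ideal.span {w} :=
    Ideal.span_insert 2 {w}
  have h2 : Ideal.span {(2 : ℤ[X])} = Ideal.map (Polynomial.C : ℤ →+* ℤ[X]) (Ideal.span {(2 : ℤ)}) := by
    rw [Ideal.map_span, Set.image_singleton]
    norm_num
  have hspan22 : Ideal.span {(2 : ℤ)} = Ideal.span {((2 : ℕ) : ℤ)} := by norm_num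
  let e0 : (ℤ ⧸ Ideal.span {(2 : ℤ)}) ≃+* ZMod 2 :=
    (Ideal.quotEquivOfEq hspan22).trans (Int.quotientSpanNatEquivZMod 2)
  let Φ : (ℤ[X] ⧸ Ideal.span {(2 : ℤ[X])}) ≃+* (ZMod 2)[X] :=
    (Ideal.quotEquivOfEq h2).trans
      ((Ideal.polynomialQuotientEquivQuotientPolynomial (Ideal.span {(2 : ℤ)})).symm.trans
        (Polynomial.mapEquiv e0))
  have hΦ : Φ (Ideal.Quotient.mk (Ideal.span {(2 : ℤ[X])}) w) = w2 := by
    simp only [Φ, RingEquiv.trans_apply, Ideal.quotEquivOfEq_mk,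
      Ideal.polynomialQuotientEquivQuotientPolynomial_symm_mk, Polynomial.mapEquiv_apply,
      Polynomial.map_map]
    rw [Subsingleton.elim ((e0 : (ℤ ⧸ Ideal.span {(2 : ℤ)}) →+* ZMod 2).comp
        (Ideal.Quotient.mk (Ideal.span {(2 : ℤ)}))) (Int.castRingHom (ZMod 2)), hw2]
  have hmapw : Ideal.span {w2} = ((Ideal.span {w}).map
      (Ideal.Quotient.mk (Ideal.span {(2 : ℤ[X])}))).map (Φ : (ℤ[X] ⧸ Ideal.span {(2 : ℤ[X])}) →+* (ZMod 2)[X]) := by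
    rw [Ideal.map_span, Set.image_singleton, Ideal.map_span, Set.image_singleton]
    exact congrArg (fun y => Ideal.span {y}) hΦ.symm
  exact ((Ideal.quotEquivOfEq h1).trans
    ((DoubleQuot.quotQuotEquivQuotSup (Ideal.span {(2 : ℤ[X])}) (Ideal.span {w})).symm.trans
      (Ideal.quotientEquiv _ _ Φ hmapw))).toAddEquiv.trans
    (quotSpanMonicEquivPi w2 hm t hdeg)


lemma span_case1 : Ideal.span {gpol 1} ⊔ Ideal.span {fpol} = Ideal.span ({2, (1 + X : ℤ[X])} : Set ℤ[X]) := by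
  apply le_antisymm
  · apply sup_le
    · rw [Ideal.span_le, Set.singleton_subset_iff]
      exact Ideal.mem_span_pair.mpr ⟨((-1 : ℤ[X]) : ℤ[X]), (1 : ℤ[X]), by rw [gpol]; push_cast; ring⟩
    · rw [Ideal.span_le, Set.singleton_subset_iff]
      exact Ideal.mem_span_pair.mpr ⟨(0 : ℤ[X]), (1 + (-2) * X + 3 * X ^ 2 + (-3) * X ^ 3 + 3 * X ^ 4 + (-2) * X ^ 5 + X ^ 6 : ℤ[X]), by rw [fpol]; push_cast; ring⟩
  · rw [Ideal.span_le]
    rintro x hx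
    simp only [Set.mem_insert_iff, Set.mem_singleton_iff] at hx
    rcases hx with rfl | rfl
    · rw [show (2 : ℤ[X]) = ((-1 : ℤ[X]) + (-2) * X + (-1) * X ^ 2 + (-1) * X ^ 3 + (-1) * X ^ 4 + (-1) * X ^ 6 : ℤ[X]) * gpol 1 + (1 : ℤ[X]) * fpol by rw [gpol, fpol]; push_cast; ring]
      exact Ideal.add_mem _ (Ideal.mul_mem_left _ _ (Ideal.mem_sup_left (Ideal.subset_span rfl)))
        (Ideal.mul_mem_left _ _ (Ideal.mem_sup_right (Ideal.subset_span rfl)))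
    · rw [show (1 + X : ℤ[X]) = ((-2) * X + (-1) * X ^ 2 + (-1) * X ^ 3 + (-1) * X ^ 4 + (-1) * X ^ 6 : ℤ[X]) * gpol 1 + (1 : ℤ[X]) * fpol by rw [gpol, fpol]; push_cast; ring]
      exact Ideal.add_mem _ (Ideal.mul_mem_left _ _ (Ideal.mem_sup_left (Ideal.subset_span rfl)))
        (Ideal.mul_mem_left _ _ (Ideal.mem_sup_right (Ideal.subset_span rfl)))

noncomputable def polyCase1 : (ℤ[X] ⧸ (Ideal.span {gpol 1} ⊔ Ideal.span {fpol})) ≃+ (Fin 1 → ZMod 2) :=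
  (Ideal.quotEquivOfEq span_case1).toAddEquiv.trans
    (quotSpanTwoEquiv (1 + X : ℤ[X]) (1 + X : (ZMod 2)[X])
      (by simp only [Polynomial.map_add, Polynomial.map_mul, Polynomial.map_pow,
        Polynomial.map_one, Polynomial.map_X, Polynomial.map_ofNat])
      (by monicity!) 1 (by compute_degree!))

lemma span_case2 : Ideal.span {gpol 2} ⊔ Ideal.span {fpol} = Ideal.span ({(1 + X : ℤ[X])} : Set ℤ[X]) := by
  apply le_antisymm
  · apply sup_le
    · rw [Ideal.span_le, Set.singleton_subset_iff]
      exact Ideal.mem_span_singleton.mpr ⟨((-1 : ℤ[X]) + X : ℤ[X]), by rw [gpol]; push_cast; ring⟩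
    · rw [Ideal.span_le, Set.singleton_subset_iff]
      exact Ideal.mem_span_singleton.mpr ⟨(1 + (-2) * X + 3 * X ^ 2 + (-3) * X ^ 3 + 3 * X ^ 4 + (-2) * X ^ 5 + X ^ 6 : ℤ[X]), by rw [fpol]; push_cast; ring⟩
  · rw [Ideal.span_le, Set.singleton_subset_iff]
    rw [show (1 + X : ℤ[X]) = ((-2) * X + X ^ 2 + (-2) * X ^ 3 + X ^ 4 + (-1) * X ^ 5 : ℤ[X]) * gpol 2 + (1 : ℤ[X]) * fpol by rw [gpol, fpol]; push_cast; ring]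
    exact Ideal.add_mem _ (Ideal.mul_mem_left _ _ (Ideal.mem_sup_left (Ideal.subset_span rfl)))
      (Ideal.mul_mem_left _ _ (Ideal.mem_sup_right (Ideal.subset_span rfl)))

noncomputable def polyCase2 : (ℤ[X] ⧸ (Ideal.span {gpol 2} ⊔ Ideal.span {fpol})) ≃+ (Fin 1 → ℤ) :=
  (Ideal.quotEquivOfEq span_case2).toAddEquiv.trans
    (quotSpanMonicEquivPi (1 + X : ℤ[X]) (by monicity!) 1 (by compute_degree!))

lemma span_case3 : Ideal.span {gpol 3} ⊔ Ideal.span {fpol} = Ideal.span ({2, (1 + X ^ 3 : ℤ[X])} : Set ℤ[X]) := by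
  apply le_antisymm
  · apply sup_le
    · rw [Ideal.span_le, Set.singleton_subset_iff]
      exact Ideal.mem_span_pair.mpr ⟨((-1 : ℤ[X]) : ℤ[X]), (1 : ℤ[X]), by rw [gpol]; push_cast; ring⟩
    · rw [Ideal.span_le, Set.singleton_subset_iff]
      exact Ideal.mem_span_pair.mpr ⟨(0 : ℤ[X]), (1 + (-1) * X + X ^ 2 + (-1) * X ^ 3 + X ^ 4 : ℤ[X]), by rw [fpol]; push_cast; ring⟩
  · rw [Ideal.span_le]
    rintro x hx
    simp only [Set.mem_insert_iff, Set.mem_singleton_iff] at hx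
    rcases hx with rfl | rfl
    · rw [show (2 : ℤ[X]) = ((-2 : ℤ[X]) + X + (-1) * X ^ 2 + (-1) * X ^ 3 + X ^ 4 + (-1) * X ^ 5 : ℤ[X]) * gpol 3 + (X : ℤ[X]) * fpol by rw [gpol, fpol]; push_cast; ring]
      exact Ideal.add_mem _ (Ideal.mul_mem_left _ _ (Ideal.mem_sup_left (Ideal.subset_span rfl)))
        (Ideal.mul_mem_left _ _ (Ideal.mem_sup_right (Ideal.subset_span rfl)))
    · rw [show (1 + X ^ 3 : ℤ[X]) = ((-1 : ℤ[X]) + X + (-1) * X ^ 2 + (-1) * X ^ 3 + X ^ 4 + (-1) * X ^ 5 : ℤ[X]) * gpol 3 + (X : ℤ[X]) * fpol by rw [gpol, fpol]; push_cast; ring]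
      exact Ideal.add_mem _ (Ideal.mul_mem_left _ _ (Ideal.mem_sup_left (Ideal.subset_span rfl)))
        (Ideal.mul_mem_left _ _ (Ideal.mem_sup_right (Ideal.subset_span rfl)))

noncomputable def polyCase3 : (ℤ[X] ⧸ (Ideal.span {gpol 3} ⊔ Ideal.span {fpol})) ≃+ (Fin 3 → ZMod 2) :=
  (Ideal.quotEquivOfEq span_case3).toAddEquiv.trans
    (quotSpanTwoEquiv (1 + X ^ 3 : ℤ[X]) (1 + X ^ 3 : (ZMod 2)[X])
      (by simp only [Polynomial.map_add, Polynomial.map_mul, Polynomial.map_pow,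
        Polynomial.map_one, Polynomial.map_X, Polynomial.map_ofNat])
      (by monicity!) 3 (by compute_degree!))

lemma span_case5 : Ideal.span {gpol 5} ⊔ Ideal.span {fpol} = Ideal.span ({2, (1 + X ^ 5 : ℤ[X])} : Set ℤ[X]) := by
  apply le_antisymm
  · apply sup_le
    · rw [Ideal.span_le, Set.singleton_subset_iff]
      exact Ideal.mem_span_pair.mpr ⟨((-1 : ℤ[X]) : ℤ[X]), (1 : ℤ[X]), by rw [gpol]; push_cast; ring⟩
    · rw [Ideal.span_le, Set.singleton_subset_iff]
      exact Ideal.mem_span_pair.mpr ⟨(0 : ℤ[X]), (1 + (-1) * X + X ^ 2 : ℤ[X]), by rw [fpol]; push_cast; ring⟩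
  · rw [Ideal.span_le]
    rintro x hx
    simp only [Set.mem_insert_iff, Set.mem_singleton_iff] at hx
    rcases hx with rfl | rfl
    · rw [show (2 : ℤ[X]) = ((-2 : ℤ[X]) + X + (-1) * X ^ 5 + X ^ 6 : ℤ[X]) * gpol 5 + (X + X ^ 2 + (-1) * X ^ 4 : ℤ[X]) * fpol by rw [gpol, fpol]; push_cast; ring]
      exact Ideal.add_mem _ (Ideal.mul_mem_left _ _ (Ideal.mem_sup_left (Ideal.subset_span rfl)))
        (Ideal.mul_mem_left _ _ (Ideal.mem_sup_right (Ideal.subset_span rfl)))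
    · rw [show (1 + X ^ 5 : ℤ[X]) = ((-1 : ℤ[X]) + X + (-1) * X ^ 5 + X ^ 6 : ℤ[X]) * gpol 5 + (X + X ^ 2 + (-1) * X ^ 4 : ℤ[X]) * fpol by rw [gpol, fpol]; push_cast; ring]
      exact Ideal.add_mem _ (Ideal.mul_mem_left _ _ (Ideal.mem_sup_left (Ideal.subset_span rfl)))
        (Ideal.mul_mem_left _ _ (Ideal.mem_sup_right (Ideal.subset_span rfl)))

noncomputable def polyCase5 : (ℤ[X] ⧸ (Ideal.span {gpol 5} ⊔ Ideal.span {fpol})) ≃+ (Fin 5 → ZMod 2) :=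
  (Ideal.quotEquivOfEq span_case5).toAddEquiv.trans
    (quotSpanTwoEquiv (1 + X ^ 5 : ℤ[X]) (1 + X ^ 5 : (ZMod 2)[X])
      (by simp only [Polynomial.map_add, Polynomial.map_mul, Polynomial.map_pow,
        Polynomial.map_one, Polynomial.map_X, Polynomial.map_ofNat])
      (by monicity!) 5 (by compute_degree!))

lemma span_case6 : Ideal.span {gpol 6} ⊔ Ideal.span {fpol} = Ideal.span ({(1 + X ^ 3 : ℤ[X])} : Set ℤ[X]) := by
  apply le_antisymm
  · apply sup_le
    · rw [Ideal.span_le, Set.singleton_subset_iff]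
      exact Ideal.mem_span_singleton.mpr ⟨((-1 : ℤ[X]) + X ^ 3 : ℤ[X]), by rw [gpol]; push_cast; ring⟩
    · rw [Ideal.span_le, Set.singleton_subset_iff]
      exact Ideal.mem_span_singleton.mpr ⟨(1 + (-1) * X + X ^ 2 + (-1) * X ^ 3 + X ^ 4 : ℤ[X]), by rw [fpol]; push_cast; ring⟩
  · rw [Ideal.span_le, Set.singleton_subset_iff]
    rw [show (1 + X ^ 3 : ℤ[X]) = ((-1 : ℤ[X]) + X + (-1) * X ^ 2 : ℤ[X]) * gpol 6 + (X : ℤ[X]) * fpol by rw [gpol, fpol]; push_cast; ring]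
    exact Ideal.add_mem _ (Ideal.mul_mem_left _ _ (Ideal.mem_sup_left (Ideal.subset_span rfl)))
      (Ideal.mul_mem_left _ _ (Ideal.mem_sup_right (Ideal.subset_span rfl)))

noncomputable def polyCase6 : (ℤ[X] ⧸ (Ideal.span {gpol 6} ⊔ Ideal.span {fpol})) ≃+ (Fin 3 → ℤ) :=
  (Ideal.quotEquivOfEq span_case6).toAddEquiv.trans
    (quotSpanMonicEquivPi (1 + X ^ 3 : ℤ[X]) (by monicity!) 3 (by compute_degree!))

lemma span_case10 : Ideal.span {gpol 10} ⊔ Ideal.span {fpol} = Ideal.span ({(1 + X ^ 5 : ℤ[X])} : Set ℤ[X]) := by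
  apply le_antisymm
  · apply sup_le
    · rw [Ideal.span_le, Set.singleton_subset_iff]
      exact Ideal.mem_span_singleton.mpr ⟨((-1 : ℤ[X]) + X ^ 5 : ℤ[X]), by rw [gpol]; push_cast; ring⟩
    · rw [Ideal.span_le, Set.singleton_subset_iff]
      exact Ideal.mem_span_singleton.mpr ⟨(1 + (-1) * X + X ^ 2 : ℤ[X]), by rw [fpol]; push_cast; ring⟩
  · rw [Ideal.span_le, Set.singleton_subset_iff]
    rw [show (1 + X ^ 5 : ℤ[X]) = ((-1 : ℤ[X]) + X : ℤ[X]) * gpol 10 + (X + X ^ 2 + (-1) * X ^ 4 : ℤ[X]) * fpol by rw [gpol, fpol]; push_cast; ring]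
    exact Ideal.add_mem _ (Ideal.mul_mem_left _ _ (Ideal.mem_sup_left (Ideal.subset_span rfl)))
      (Ideal.mul_mem_left _ _ (Ideal.mem_sup_right (Ideal.subset_span rfl)))

noncomputable def polyCase10 : (ℤ[X] ⧸ (Ideal.span {gpol 10} ⊔ Ideal.span {fpol})) ≃+ (Fin 5 → ℤ) :=
  (Ideal.quotEquivOfEq span_case10).toAddEquiv.trans
    (quotSpanMonicEquivPi (1 + X ^ 5 : ℤ[X]) (by monicity!) 5 (by compute_degree!))

lemma span_case15 : Ideal.span {gpol 15} ⊔ Ideal.span {fpol} = Ideal.span ({2, (1 + X + X ^ 2 + X ^ 5 + X ^ 6 + X ^ 7 : ℤ[X])} : Set ℤ[X]) := by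
  apply le_antisymm
  · apply sup_le
    · rw [Ideal.span_le, Set.singleton_subset_iff]
      exact Ideal.mem_span_pair.mpr ⟨(X + X ^ 5 + X ^ 6 : ℤ[X]), ((-1 : ℤ[X]) + (-1) * X + 2 * X ^ 2 + (-1) * X ^ 3 + (-1) * X ^ 4 + X ^ 5 + (-1) * X ^ 7 + X ^ 8 : ℤ[X]), by rw [gpol]; push_cast; ring⟩
    · rw [Ideal.span_le, Set.singleton_subset_iff]
      exact Ideal.mem_span_pair.mpr ⟨((-1) * X + (-1) * X ^ 6 : ℤ[X]), (1 : ℤ[X]), by rw [fpol]; push_cast; ring⟩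
  · rw [Ideal.span_le]
    rintro x hx
    simp only [Set.mem_insert_iff, Set.mem_singleton_iff] at hx
    rcases hx with rfl | rfl
    · rw [show (2 : ℤ[X]) = ((-1 : ℤ[X]) : ℤ[X]) * gpol 15 + (1 + X + (-1) * X ^ 3 + (-1) * X ^ 4 + (-1) * X ^ 5 + X ^ 7 + X ^ 8 : ℤ[X]) * fpol by rw [gpol, fpol]; push_cast; ring]
      exact Ideal.add_mem _ (Ideal.mul_mem_left _ _ (Ideal.mem_sup_left (Ideal.subset_span rfl)))
        (Ideal.mul_mem_left _ _ (Ideal.mem_sup_right (Ideal.subset_span rfl)))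
    · rw [show (1 + X + X ^ 2 + X ^ 5 + X ^ 6 + X ^ 7 : ℤ[X]) = ((-1) * X + (-1) * X ^ 6 : ℤ[X]) * gpol 15 + (1 + X + X ^ 2 + (-1) * X ^ 4 + (-1) * X ^ 5 + X ^ 7 + X ^ 8 + (-1) * X ^ 10 + (-1) * X ^ 11 + X ^ 13 + X ^ 14 : ℤ[X]) * fpol by rw [gpol, fpol]; push_cast; ring]
      exact Ideal.add_mem _ (Ideal.mul_mem_left _ _ (Ideal.mem_sup_left (Ideal.subset_span rfl)))
        (Ideal.mul_mem_left _ _ (Ideal.mem_sup_right (Ideal.subset_span rfl)))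

noncomputable def polyCase15 : (ℤ[X] ⧸ (Ideal.span {gpol 15} ⊔ Ideal.span {fpol})) ≃+ (Fin 7 → ZMod 2) :=
  (Ideal.quotEquivOfEq span_case15).toAddEquiv.trans
    (quotSpanTwoEquiv (1 + X + X ^ 2 + X ^ 5 + X ^ 6 + X ^ 7 : ℤ[X]) (1 + X + X ^ 2 + X ^ 5 + X ^ 6 + X ^ 7 : (ZMod 2)[X])
      (by simp only [Polynomial.map_add, Polynomial.map_mul, Polynomial.map_pow,
        Polynomial.map_one, Polynomial.map_X, Polynomial.map_ofNat])
      (by monicity!) 7 (by compute_degree!))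

lemma span_case30 : Ideal.span {gpol 30} ⊔ Ideal.span {fpol} = Ideal.span ({(1 + (-1) * X + X ^ 2 + X ^ 5 + (-1) * X ^ 6 + X ^ 7 : ℤ[X])} : Set ℤ[X]) := by
  apply le_antisymm
  · apply sup_le
    · rw [Ideal.span_le, Set.singleton_subset_iff]
      exact Ideal.mem_span_singleton.mpr ⟨((-1 : ℤ[X]) + (-1) * X + X ^ 3 + X ^ 4 + X ^ 5 + (-1) * X ^ 7 + (-1) * X ^ 8 + X ^ 15 + X ^ 16 + (-1) * X ^ 18 + (-1) * X ^ 19 + (-1) * X ^ 20 + X ^ 22 + X ^ 23 : ℤ[X]), by rw [gpol]; push_cast; ring⟩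
    · rw [Ideal.span_le, Set.singleton_subset_iff]
      exact Ideal.mem_span_singleton.mpr ⟨(1 : ℤ[X]), by rw [fpol]; push_cast; ring⟩
  · rw [Ideal.span_le, Set.singleton_subset_iff]
    rw [show (1 + (-1) * X + X ^ 2 + X ^ 5 + (-1) * X ^ 6 + X ^ 7 : ℤ[X]) = (0 : ℤ[X]) * gpol 30 + (1 : ℤ[X]) * fpol by rw [gpol, fpol]; push_cast; ring]
    exact Ideal.add_mem _ (Ideal.mul_mem_left _ _ (Ideal.mem_sup_left (Ideal.subset_span rfl)))
      (Ideal.mul_mem_left _ _ (Ideal.mem_sup_right (Ideal.subset_span rfl)))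

noncomputable def polyCase30 : (ℤ[X] ⧸ (Ideal.span {gpol 30} ⊔ Ideal.span {fpol})) ≃+ (Fin 7 → ℤ) :=
  (Ideal.quotEquivOfEq span_case30).toAddEquiv.trans
    (quotSpanMonicEquivPi (1 + (-1) * X + X ^ 2 + X ^ 5 + (-1) * X ^ 6 + X ^ 7 : ℤ[X]) (by monicity!) 7 (by compute_degree!))


theorem stmt_18 (k : ℕ) (hk : 1 ≤ k) (d : ℕ) (hd : d = Nat.gcd 30 k) :
    (d = 1 ∨ d = 3 ∨ d = 5 → Nonempty (coker ((1 - cycMat k + cycMat k ^ 2) * (1 + cycMat k ^ 5)) ≃+ (Fin d → ZMod 2))) ∧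
    (d = 15 → Nonempty (coker ((1 - cycMat k + cycMat k ^ 2) * (1 + cycMat k ^ 5)) ≃+ (Fin 7 → ZMod 2))) ∧
    (d = 2 ∨ d = 6 ∨ d = 10 → Nonempty (coker ((1 - cycMat k + cycMat k ^ 2) * (1 + cycMat k ^ 5)) ≃+ (Fin (d / 2) → ℤ))) ∧
    (d = 30 → Nonempty (coker ((1 - cycMat k + cycMat k ^ 2) * (1 + cycMat k ^ 5)) ≃+ (Fin 7 → ℤ))) := by
  have hk0 : k ≠ 0 := by omega
  have base := (cokerToPoly k hk0).trans (Ideal.quotEquivOfEq (span_eq k hk0)).toAddEquiv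
  refine ⟨?_, ?_, ?_, ?_⟩
  · rintro (h | h | h) <;> rw [h] <;>
      [(have hg : Nat.gcd 30 k = 1 := by omega);
       (have hg : Nat.gcd 30 k = 3 := by omega);
       (have hg : Nat.gcd 30 k = 5 := by omega)] <;>
      rw [hg] at base
    · exact ⟨base.trans polyCase1⟩
    · exact ⟨base.trans polyCase3⟩
    · exact ⟨base.trans polyCase5⟩
  · intro h
    have hg : Nat.gcd 30 k = 15 := by omega
    rw [hg] at base
    exact ⟨base.trans polyCase15⟩
  · rintro (h | h | h) <;> rw [h] <;>
      [(have hg : Nat.gcd 30 k = 2 := by omega);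
       (have hg : Nat.gcd 30 k = 6 := by omega);
       (have hg : Nat.gcd 30 k = 10 := by omega)] <;>
      rw [hg] at base
    · exact ⟨base.trans polyCase2⟩
    · exact ⟨base.trans polyCase6⟩
    · exact ⟨base.trans polyCase10⟩
  · intro h
    have hg : Nat.gcd 30 k = 30 := by omega
    rw [hg] at base
    exact ⟨base.trans polyCase30⟩
end

section
/- Let n ≥ 2 and k ≥ 1 be integers, and put d = gcd(n+1, k) and r = (n+1)/d. If n is odd (so n ≥ 3), then the abelian group (Coker (1_k − X_k^{n+1}))^{(n−3)/2} ⊕ Coker ((1_k − X_k)·(1_k + X_k^{(n+1)/2})) is isomorphic to ℤ^{(nd−3d+2)/2} ⊕ (ℤ/2ℤ)^{d−1} if r is even, and to ℤ^{(nd−2d+2)/2} if r is odd. If n is even, then (Coker (1_k − X_k^{n+1}))^{(n−2)/2} ⊕ Coker (1_k − X_k) ≅ ℤ^{(nd−2d+2)/2}. -/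
open Matrix Polynomial

set_option linter.unusedVariables false

section cyc
variable {k : ℕ}

/-- successor map on Fin k -/
def csucc (hk : 0 < k) (j : Fin k) : Fin k := ⟨((j:ℕ) + 1) % k, Nat.mod_lt _ hk⟩
/-- predecessor map on Fin k -/
def cpred (hk : 0 < k) (i : Fin k) : Fin k := ⟨((i:ℕ) + k - 1) % k, Nat.mod_lt _ hk⟩

lemma csucc_cpred (hk : 0 < k) (i : Fin k) : csucc hk (cpred hk i) = i := by
  unfold csucc cpred
  ext
  simp only []
  have h1 : (i:ℕ) < k := i.isLt
  rcases Nat.eq_zero_or_pos (i:ℕ) with h | h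
  · have h0 : (k - 1) % k = k - 1 := Nat.mod_eq_of_lt (by omega)
    have h2 : k - 1 + 1 = k := by omega
    simp only [h, Nat.zero_add, h0, h2, Nat.mod_self]
  · have : ((i:ℕ) + k - 1) % k = (i:ℕ) - 1 := by
      have : (i:ℕ) + k - 1 = ((i:ℕ) - 1) + k := by omega
      rw [this, Nat.add_mod_right]; exact Nat.mod_eq_of_lt (by omega)
    rw [this]
    have : (i:ℕ) - 1 + 1 = (i:ℕ) := by omega
    rw [this, Nat.mod_eq_of_lt h1]

lemma cpred_csucc (hk : 0 < k) (j : Fin k) : cpred hk (csucc hk j) = j := by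
  unfold csucc cpred
  ext
  simp only []
  have h1 : (j:ℕ) < k := j.isLt
  rcases Nat.lt_or_ge ((j:ℕ)+1) k with h | h
  · rw [Nat.mod_eq_of_lt h]
    have : (j:ℕ) + 1 + k - 1 = (j:ℕ) + k := by omega
    rw [this, Nat.add_mod_right, Nat.mod_eq_of_lt h1]
  · have hjk : (j:ℕ) + 1 = k := by omega
    rw [hjk, Nat.mod_self]
    simp
    omega

lemma cycMat_mulVec (hk : 0 < k) (v : Fin k → ℤ) (i : Fin k) :
    (cycMat k).mulVec v i = v (cpred hk i) := by
  unfold Matrix.mulVec cycMat dotProduct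
  simp only [Matrix.of_apply]
  rw [Finset.sum_eq_single (cpred hk i)]
  · have : ((cpred hk i : ℕ) + 1) % k = (i:ℕ) := congrArg Fin.val (csucc_cpred hk i)
    simp [this]
  · intro b _ hb
    have : ¬ (((b:ℕ) + 1) % k = (i:ℕ)) := by
      intro hcon
      apply hb
      have : csucc hk b = i := by ext; exact hcon
      rw [← this, cpred_csucc]
    simp [this]
  · intro h; exact absurd (Finset.mem_univ _) h

lemma cycMat_mulVec_single (hk : 0 < k) (j : Fin k) :
    (cycMat k).mulVec (Pi.single j 1) = Pi.single (csucc hk j) 1 := by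
  funext i
  rw [cycMat_mulVec hk]
  rcases eq_or_ne i (csucc hk j) with h | h
  · subst h; rw [cpred_csucc]; simp
  · have : cpred hk i ≠ j := by
      intro hc; apply h; rw [← hc, csucc_cpred]
    rw [Pi.single_eq_of_ne this, Pi.single_eq_of_ne h]

lemma sum_cycMat_mulVec (hk : 0 < k) (v : Fin k → ℤ) :
    ∑ i, (cycMat k).mulVec v i = ∑ i, v i := by
  have hbij : Function.Bijective (cpred hk) :=
    Function.bijective_iff_has_inverse.2 ⟨csucc hk, fun i => csucc_cpred hk i, fun j => cpred_csucc hk j⟩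
  calc ∑ i, (cycMat k).mulVec v i = ∑ i, v (cpred hk i) := by
        simp [cycMat_mulVec hk]
    _ = ∑ i, v i := Fintype.sum_bijective _ hbij _ _ (fun i => rfl)
end cyc

noncomputable section bridge
variable {k : ℕ}

lemma monic_xk (hk : 0 < k) : ((X:ℤ[X])^k - 1).Monic := by
  have := monic_X_pow_sub_C (1:ℤ) (n := k) (by omega)
  simpa using this

abbrev Rk (k : ℕ) := AdjoinRoot ((X:ℤ[X])^k - 1)

def pbk (hk : 0 < k) : PowerBasis ℤ (Rk k) := AdjoinRoot.powerBasis' (monic_xk hk)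

lemma pbk_dim (hk : 0 < k) : (pbk hk).dim = k := by
  show ((X:ℤ[X])^k - 1).natDegree = k
  rw [← Polynomial.C_1, natDegree_X_pow_sub_C]

def bk (hk : 0 < k) : Module.Basis (Fin k) ℤ (Rk k) := (pbk hk).basis.reindex (finCongr (pbk_dim hk))

lemma bk_apply (hk : 0 < k) (i : Fin k) :
    bk hk i = (AdjoinRoot.root ((X:ℤ[X])^k - 1)) ^ (i : ℕ) := by
  rw [bk, Module.Basis.reindex_apply]
  rw [(pbk hk).basis_eq_pow]
  rfl

lemma root_pow_k (hk : 0 < k) : (AdjoinRoot.root ((X:ℤ[X])^k - 1)) ^ k = 1 := by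
  have h := AdjoinRoot.mk_self (f := (X:ℤ[X])^k - 1)
  rw [map_sub, map_pow, AdjoinRoot.mk_X, _root_.map_one, sub_eq_zero] at h
  exact h

lemma root_pow_mod (hk : 0 < k) (a : ℕ) :
    (AdjoinRoot.root ((X:ℤ[X])^k - 1)) ^ (a % k) = (AdjoinRoot.root ((X:ℤ[X])^k - 1)) ^ a := by
  conv_rhs => rw [← Nat.div_add_mod a k]
  rw [pow_add, pow_mul, root_pow_k hk, one_pow, one_mul]

def ek (hk : 0 < k) : (Fin k → ℤ) ≃ₗ[ℤ] Rk k := (bk hk).equivFun.symm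

lemma ek_single (hk : 0 < k) (j : Fin k) :
    ek hk (Pi.single j 1) = (AdjoinRoot.root ((X:ℤ[X])^k - 1)) ^ (j : ℕ) := by
  rw [ek, Module.Basis.equivFun_symm_apply, ← bk_apply hk]
  rw [Finset.sum_eq_single j]
  · simp
  · intro b _ hb; rw [Pi.single_eq_of_ne hb, zero_smul]
  · intro h; exact absurd (Finset.mem_univ _) h

lemma ek_mulVec_X (hk : 0 < k) (v : Fin k → ℤ) :
    ek hk ((cycMat k).mulVec v) = AdjoinRoot.root ((X:ℤ[X])^k - 1) * ek hk v := by
  have : (ek hk).toLinearMap ∘ₗ (cycMat k).mulVecLin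
      = (LinearMap.mulLeft ℤ (AdjoinRoot.root ((X:ℤ[X])^k - 1))) ∘ₗ (ek hk).toLinearMap := by
    apply Module.Basis.ext (Pi.basisFun ℤ (Fin k))
    intro j
    simp only [LinearMap.comp_apply, Pi.basisFun_apply, LinearEquiv.coe_coe,
      Matrix.mulVecLin_apply, LinearMap.mulLeft_apply]
    rw [cycMat_mulVec_single hk j, ek_single hk, ek_single hk]
    show (AdjoinRoot.root _) ^ (((j:ℕ)+1) % k) = _
    rw [root_pow_mod hk, pow_succ, mul_comm]
  exact LinearMap.congr_fun this v

lemma ek_mulVec (hk : 0 < k) (p : ℤ[X]) (v : Fin k → ℤ) :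
    ek hk ((aeval (cycMat k) p).mulVec v)
      = aeval (AdjoinRoot.root ((X:ℤ[X])^k - 1)) p * ek hk v := by
  induction p using Polynomial.induction_on generalizing v with
  | C a =>
      simp only [aeval_C]
      rw [Algebra.algebraMap_eq_smul_one (A := Matrix (Fin k) (Fin k) ℤ)]
      rw [smul_mulVec, one_mulVec, _root_.map_smul]
      rw [Algebra.algebraMap_eq_smul_one (A := Rk k)]
      rw [smul_mul_assoc, one_mul]
  | add p q hp hq =>
      simp only [_root_.map_add, Matrix.add_mulVec, hp, hq, add_mul]
  | monomial n a ih =>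
      have hM : aeval (cycMat k) (C a * X ^ (n+1)) = aeval (cycMat k) (C a * X ^ n) * cycMat k := by
        rw [_root_.map_mul, _root_.map_mul, _root_.map_pow, _root_.map_pow, aeval_X, pow_succ, mul_assoc]
      have hr : aeval (AdjoinRoot.root ((X:ℤ[X])^k - 1)) (C a * X ^ (n+1))
          = aeval (AdjoinRoot.root ((X:ℤ[X])^k - 1)) (C a * X ^ n)
            * AdjoinRoot.root ((X:ℤ[X])^k - 1) := by
        rw [_root_.map_mul, _root_.map_mul, _root_.map_pow, _root_.map_pow, aeval_X, pow_succ, mul_assoc]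
      rw [hM, ← Matrix.mulVec_mulVec, ih, ek_mulVec_X hk, hr]
      ring

lemma ek_range (hk : 0 < k) (p : ℤ[X]) :
    Submodule.map (ek hk : (Fin k → ℤ) →ₗ[ℤ] Rk k) (LinearMap.range (aeval (cycMat k) p).mulVecLin)
      = (Ideal.span {aeval (AdjoinRoot.root ((X:ℤ[X])^k - 1)) p}).restrictScalars ℤ := by
  ext x
  simp only [Submodule.mem_map, LinearMap.mem_range, Matrix.mulVecLin_apply,
    Submodule.restrictScalars_mem, Ideal.mem_span_singleton']
  constructor
  · rintro ⟨y, ⟨v, rfl⟩, rfl⟩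
    exact ⟨ek hk v, by rw [mul_comm, ← ek_mulVec hk, LinearEquiv.coe_coe]⟩
  · rintro ⟨a, rfl⟩
    obtain ⟨v, rfl⟩ := (ek hk).surjective a
    exact ⟨(aeval (cycMat k) p).mulVec v, ⟨v, rfl⟩, by rw [LinearEquiv.coe_coe, ek_mulVec hk, mul_comm]⟩

/-- The main bridge -/
def cokerPolyEquiv (hk : 0 < k) (p : ℤ[X]) :
    coker (aeval (cycMat k) p) ≃+ (ℤ[X] ⧸ Ideal.span {(X:ℤ[X])^k - 1, p}) := by
  have e1 : coker (aeval (cycMat k) p) ≃+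
      (Rk k ⧸ Submodule.restrictScalars ℤ
        (Ideal.span {aeval (AdjoinRoot.root ((X:ℤ[X])^k - 1)) p})) :=
    (Submodule.Quotient.equiv _ _ (ek hk) (ek_range hk p)).toAddEquiv
  have e2 : (Rk k ⧸ Submodule.restrictScalars ℤ
        (Ideal.span {aeval (AdjoinRoot.root ((X:ℤ[X])^k - 1)) p})) ≃+
      (Rk k ⧸ (Ideal.span {aeval (AdjoinRoot.root ((X:ℤ[X])^k - 1)) p})) :=
    (Submodule.Quotient.restrictScalarsEquiv ℤ _).toAddEquiv
  have heq : Ideal.span {aeval (AdjoinRoot.root ((X:ℤ[X])^k - 1)) p}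
      = Ideal.map (Ideal.Quotient.mk (Ideal.span {(X:ℤ[X])^k - 1})) (Ideal.span {p}) := by
    rw [Ideal.map_span, Set.image_singleton, AdjoinRoot.aeval_eq]
    rfl
  let eR : Rk k ≃+* (ℤ[X] ⧸ Ideal.span {(X:ℤ[X])^k - 1}) :=
    { Equiv.refl _ with map_mul' := fun _ _ => rfl, map_add' := fun _ _ => rfl }
  have e3 : (Rk k ⧸ (Ideal.span {aeval (AdjoinRoot.root ((X:ℤ[X])^k - 1)) p})) ≃+
      (ℤ[X] ⧸ (Ideal.span {(X:ℤ[X])^k - 1} ⊔ Ideal.span {p})) :=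
    ((Ideal.quotientEquiv _ _ eR (by
      rw [Ideal.map_span, Ideal.map_span, Set.image_singleton, Set.image_singleton,
        AdjoinRoot.aeval_eq]
      rfl)).trans (DoubleQuot.quotQuotEquivQuotSup _ _)).toAddEquiv
  have e4 : (ℤ[X] ⧸ (Ideal.span {(X:ℤ[X])^k - 1} ⊔ Ideal.span {p})) ≃+
      (ℤ[X] ⧸ Ideal.span {(X:ℤ[X])^k - 1, p}) :=
    (Ideal.quotEquivOfEq (Ideal.span_insert ((X:ℤ[X])^k - 1) {p}).symm).toAddEquiv
  exact ((e1.trans e2).trans e3).trans e4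

end bridge

section ideals

lemma dvd_pow_sub_one {a b : ℕ} (h : a ∣ b) : (X:ℤ[X])^a - 1 ∣ (X:ℤ[X])^b - 1 := by
  obtain ⟨c, rfl⟩ := h
  have := sub_dvd_pow_sub_pow ((X:ℤ[X])^a) 1 c
  rwa [one_pow, ← pow_mul] at this

lemma gcd_pow_sub_one_mem : ∀ a b : ℕ,
    (X:ℤ[X])^(Nat.gcd a b) - 1 ∈ Ideal.span {(X:ℤ[X])^a - 1, (X:ℤ[X])^b - 1} := by
  intro a b
  induction a, b using Nat.gcd.induction with
  | H0 b =>
      rw [Nat.gcd_zero_left]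
      exact Ideal.subset_span (Set.mem_insert_of_mem _ rfl)
  | H1 a b ha IH =>
      rw [Nat.gcd_rec]
      have hle : Ideal.span {(X:ℤ[X])^(b % a) - 1, (X:ℤ[X])^a - 1}
          ≤ Ideal.span {(X:ℤ[X])^a - 1, (X:ℤ[X])^b - 1} := by
        refine Ideal.span_le.2 ?_
        rintro x (rfl | rfl)
        · have key : (X:ℤ[X])^(b % a) - 1
              = ((X:ℤ[X])^b - 1) - (X:ℤ[X])^(b % a) * ((X:ℤ[X])^(a * (b / a)) - 1) := by
            have hb : b % a + a * (b / a) = b := Nat.mod_add_div b a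
            rw [mul_sub, ← pow_add, hb]; ring
          rw [key]
          refine sub_mem (Ideal.subset_span (Set.mem_insert_of_mem _ rfl)) ?_
          refine Ideal.mul_mem_left _ _ ?_
          obtain ⟨c, hc⟩ : (X:ℤ[X])^a - 1 ∣ (X:ℤ[X])^(a * (b / a)) - 1 :=
            dvd_pow_sub_one ⟨b / a, rfl⟩
          rw [hc]
          exact Ideal.mul_mem_right _ _ (Ideal.subset_span (Set.mem_insert _ _))
        · exact Ideal.subset_span (Set.mem_insert _ _)
      exact hle IH

lemma span_pair_gcd (a b : ℕ) :
    Ideal.span {(X:ℤ[X])^a - 1, (X:ℤ[X])^b - 1}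
      = Ideal.span {(X:ℤ[X])^(Nat.gcd a b) - 1} := by
  apply le_antisymm
  · refine Ideal.span_le.2 ?_
    rintro x (rfl | rfl)
    · exact Ideal.mem_span_singleton.2 (dvd_pow_sub_one (Nat.gcd_dvd_left a b))
    · exact Ideal.mem_span_singleton.2 (dvd_pow_sub_one (Nat.gcd_dvd_right a b))
  · refine Ideal.span_le.2 ?_
    rintro x rfl
    exact gcd_pow_sub_one_mem a b

lemma monic_xg (g : ℕ) (hg : 0 < g) : ((X:ℤ[X])^g - 1).Monic := by
  have := Polynomial.monic_X_pow_sub_C (1:ℤ) (n := g) (by omega)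
  simpa using this

noncomputable def quotSpanMonicEquiv {g : ℤ[X]} (hg : g.Monic) :
    (ℤ[X] ⧸ Ideal.span {g}) ≃+ (Fin g.natDegree → ℤ) :=
  ((AdjoinRoot.powerBasis' hg).basis.equivFun).toAddEquiv

def piReindexAdd {M : Type*} [AddCommMonoid M] {α β : Type*} (e : α ≃ β) :
    (α → M) ≃+ (β → M) :=
  { Equiv.piCongrLeft' (fun _ => M) e with map_add' := fun f g => rfl }

lemma cokerA {k : ℕ} (s : ℕ) (hk : 0 < k) (hs : 0 < s) :
    Nonempty (coker (1 - cycMat k ^ s) ≃+ (Fin (Nat.gcd s k) → ℤ)) := by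
  have hmat : (1 - cycMat k ^ s) = aeval (cycMat k) ((1:ℤ[X]) - X^s) := by
    simp [_root_.map_sub, _root_.map_one, _root_.map_pow, aeval_X]
  have e1 := cokerPolyEquiv hk ((1:ℤ[X]) - X^s)
  rw [hmat]
  have hideal : Ideal.span {(X:ℤ[X])^k - 1, 1 - X^s}
      = Ideal.span {(X:ℤ[X])^(Nat.gcd s k) - 1} := by
    have h2 : Ideal.span {(1:ℤ[X]) - X^s} = Ideal.span {(X:ℤ[X])^s - 1} := by
      rw [show (1:ℤ[X]) - X^s = -((X:ℤ[X])^s - 1) by ring, Ideal.span_singleton_neg]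
    rw [Ideal.span_insert, h2, sup_comm, ← Ideal.span_insert]
    exact span_pair_gcd s k
  have e2 := Ideal.quotEquivOfEq hideal
  have e3 := quotSpanMonicEquiv (monic_xg (Nat.gcd s k) (Nat.gcd_pos_of_pos_left k hs))
  have hdeg : ((X:ℤ[X])^(Nat.gcd s k) - 1).natDegree = Nat.gcd s k := by
    rw [← Polynomial.C_1, natDegree_X_pow_sub_C]
  exact ⟨((e1.trans e2.toAddEquiv).trans e3).trans (piReindexAdd (finCongr hdeg))⟩

end ideals

section ideals2


lemma A_dvd_pow_two_m (m : ℕ) :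
    ((1:ℤ[X]) - X) * (1 + X^m) ∣ (X:ℤ[X])^(2*m) - 1 := by
  refine ⟨-(∑ i ∈ Finset.range m, (X:ℤ[X])^i), ?_⟩
  have g := geom_sum_mul (X:ℤ[X]) m
  linear_combination (-(1:ℤ[X]) - X^m) * g

-- X^d - 1 ∈ J
lemma pow_gcd_mem_J (k m : ℕ) :
    (X:ℤ[X])^(Nat.gcd (2*m) k) - 1
      ∈ Ideal.span {(X:ℤ[X])^k - 1, ((1:ℤ[X]) - X) * (1 + X^m)} := by
  have hle : Ideal.span {(X:ℤ[X])^(2*m) - 1, (X:ℤ[X])^k - 1}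
      ≤ Ideal.span {(X:ℤ[X])^k - 1, ((1:ℤ[X]) - X) * (1 + X^m)} := by
    refine Ideal.span_le.2 ?_
    rintro x (rfl | rfl)
    · obtain ⟨q, hq⟩ := A_dvd_pow_two_m m
      rw [hq]
      exact Ideal.mul_mem_right _ _ (Ideal.subset_span (Set.mem_insert_of_mem _ rfl))
    · exact Ideal.subset_span (Set.mem_insert _ _)
  exact hle (gcd_pow_sub_one_mem (2*m) k)

lemma P_dvd_pow_d (h : ℕ) :
    ((X:ℤ[X]) - 1) * (X^h + 1) ∣ (X:ℤ[X])^(2*h) - 1 := by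
  refine ⟨∑ i ∈ Finset.range h, (X:ℤ[X])^i, ?_⟩
  have g := geom_sum_mul (X:ℤ[X]) h
  linear_combination (-(X:ℤ[X])^h - 1) * g

lemma spanROdd (k m h c : ℕ) (hgcd : Nat.gcd (2*m) k = 2*h) (hmc : m = h + c*(2*h)) :
    Ideal.span {(X:ℤ[X])^k - 1, ((1:ℤ[X]) - X) * (1 + X^m)}
      = Ideal.span {((X:ℤ[X]) - 1) * (X^h + 1)} := by
  set A : ℤ[X] := ((1:ℤ[X]) - X) * (1 + X^m) with hA
  set P : ℤ[X] := ((X:ℤ[X]) - 1) * (X^h + 1) with hP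
  have hd2m : (2*h) ∣ 2*m := hgcd ▸ Nat.gcd_dvd_left (2*m) k
  have hdk : (2*h) ∣ k := hgcd ▸ Nat.gcd_dvd_right (2*m) k
  -- A + P = -(X-1) * X^h * (X^(c*(2h)) - 1)
  have hsum : A + P = -(((X:ℤ[X]) - 1) * X^h) * ((X:ℤ[X])^(c*(2*h)) - 1) := by
    rw [hA, hP, hmc]
    ring
  have hdvd_cd : (X:ℤ[X])^(2*h) - 1 ∣ (X:ℤ[X])^(c*(2*h)) - 1 :=
    dvd_pow_sub_one ⟨c, (mul_comm _ _)⟩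
  apply le_antisymm
  · refine Ideal.span_le.2 ?_
    rintro x (rfl | rfl)
    · -- X^k - 1
      exact Ideal.mem_span_singleton.2 ((P_dvd_pow_d h).trans (dvd_pow_sub_one hdk))
    · -- A
      refine Ideal.mem_span_singleton.2 ?_
      have h1 : (P:ℤ[X]) ∣ A + P := by
        rw [hsum]
        exact Dvd.dvd.mul_left ((P_dvd_pow_d h).trans hdvd_cd) _
      have h2 : (P:ℤ[X]) ∣ -P := (dvd_refl P).neg_right
      have := dvd_add h1 h2
      simpa using this
  · refine Ideal.span_le.2 ?_
    rintro x rfl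
    -- P ∈ J
    have hXd : (X:ℤ[X])^(2*h) - 1 ∈ Ideal.span {(X:ℤ[X])^k - 1, A} := by
      have := pow_gcd_mem_J k m
      rwa [hgcd] at this
    have hA_mem : A ∈ Ideal.span {(X:ℤ[X])^k - 1, A} :=
      Ideal.subset_span (Set.mem_insert_of_mem _ rfl)
    have hsum_mem : A + P ∈ Ideal.span {(X:ℤ[X])^k - 1, A} := by
      rw [hsum]
      obtain ⟨q, hq⟩ := hdvd_cd
      rw [hq]
      exact Ideal.mul_mem_left _ _ (Ideal.mul_mem_right _ _ hXd)
    have : (A + P) - A ∈ Ideal.span {(X:ℤ[X])^k - 1, A} := sub_mem hsum_mem hA_mem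
    simpa using this

lemma spanREven (k m d : ℕ) (hgcd : Nat.gcd (2*m) k = d) (hdm : d ∣ m) :
    Ideal.span {(X:ℤ[X])^k - 1, ((1:ℤ[X]) - X) * (1 + X^m)}
      = Ideal.span {(X:ℤ[X])^d - 1, 2 - 2*X} := by
  set A : ℤ[X] := ((1:ℤ[X]) - X) * (1 + X^m) with hA
  have hdk : d ∣ k := hgcd ▸ Nat.gcd_dvd_right (2*m) k
  have hdiff : A - (2 - 2*X) = ((X:ℤ[X])^m - 1) * (1 - X) := by rw [hA]; ring
  have hXd_mem : (X:ℤ[X])^d - 1 ∈ Ideal.span {(X:ℤ[X])^k - 1, A} := by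
    have := pow_gcd_mem_J k m
    rwa [hgcd] at this
  have hdvdm : (X:ℤ[X])^d - 1 ∣ (X:ℤ[X])^m - 1 := dvd_pow_sub_one hdm
  apply le_antisymm
  · refine Ideal.span_le.2 ?_
    rintro x (rfl | rfl)
    · -- X^k - 1 ∈ span {X^d - 1, 2-2X}
      obtain ⟨q, hq⟩ := dvd_pow_sub_one hdk
      rw [hq]
      exact Ideal.mul_mem_right _ _ (Ideal.subset_span (Set.mem_insert _ _))
    · -- A = (2 - 2X) + (X^m - 1)(X - 1)
      have : A = (2 - 2*(X:ℤ[X])) + ((X:ℤ[X])^m - 1) * (1 - X) := by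
        rw [hA]; ring
      rw [this]
      refine add_mem (Ideal.subset_span (Set.mem_insert_of_mem _ rfl)) ?_
      obtain ⟨q, hq⟩ := hdvdm
      rw [hq, mul_assoc]
      exact Ideal.mul_mem_right _ _ (Ideal.subset_span (Set.mem_insert _ _))
  · refine Ideal.span_le.2 ?_
    rintro x (rfl | rfl)
    · exact hXd_mem
    · -- 2 - 2X = A - (X^m - 1)(X-1)
      have h2 : (2 - 2*(X:ℤ[X])) = A - ((X:ℤ[X])^m - 1) * (1 - X) := by rw [hA]; ring
      rw [h2]
      refine sub_mem (Ideal.subset_span (Set.mem_insert_of_mem _ rfl)) ?_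
      obtain ⟨q, hq⟩ := hdvdm
      rw [hq, mul_assoc]
      exact Ideal.mul_mem_right _ _ hXd_mem

lemma monicP (h : ℕ) (hh : 0 < h) : (((X:ℤ[X]) - 1) * (X^h + 1)).Monic := by
  have m1 : ((X:ℤ[X]) - 1).Monic := by
    have := Polynomial.monic_X_sub_C (1:ℤ)
    simpa using this
  have hdeg : Polynomial.degree (1:ℤ[X]) < (h : WithBot ℕ) := by
    rw [Polynomial.degree_one]
    exact_mod_cast hh
  have m2 : ((X:ℤ[X])^h + 1).Monic := Polynomial.monic_X_pow_add hdeg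
  exact m1.mul m2

lemma natDegreeP (h : ℕ) (hh : 0 < h) : (((X:ℤ[X]) - 1) * (X^h + 1)).natDegree = h + 1 := by
  have m1 : ((X:ℤ[X]) - 1).Monic := by
    have := Polynomial.monic_X_sub_C (1:ℤ); simpa using this
  have hdeg : Polynomial.degree (1:ℤ[X]) < (h : WithBot ℕ) := by
    rw [Polynomial.degree_one]
    exact_mod_cast hh
  have m2 : ((X:ℤ[X])^h + 1).Monic := Polynomial.monic_X_pow_add hdeg
  rw [m1.natDegree_mul m2]
  have d1 : ((X:ℤ[X]) - 1).natDegree = 1 := by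
    have := Polynomial.natDegree_X_sub_C (1:ℤ); simpa using this
  have d2 : ((X:ℤ[X])^h + 1).natDegree = h := by
    have := Polynomial.natDegree_X_pow_add_C (n := h) (r := (1:ℤ))
    simpa using this
  omega

end ideals2

section cokerTwo

variable {d' : ℕ}

lemma aeval_two_sub_two_X (d : ℕ) :
    aeval (cycMat d) ((2:ℤ[X]) - 2*X) = (2:ℤ) • (1 : Matrix (Fin d) (Fin d) ℤ) - (2:ℤ) • cycMat d := by
  have h2 : ((2:ℤ[X])) = C 2 := by norm_num
  rw [h2, map_sub, _root_.map_mul, aeval_X, aeval_C, Algebra.algebraMap_eq_smul_one,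
    smul_mul_assoc, one_mul]

lemma M2_mulVec (hd : 0 < d'+1) (w : Fin (d'+1) → ℤ) (i : Fin (d'+1)) :
    (aeval (cycMat (d'+1)) ((2:ℤ[X]) - 2*X)).mulVec w i = 2 * w i - 2 * w (cpred hd i) := by
  rw [aeval_two_sub_two_X, Matrix.sub_mulVec, Matrix.smul_mulVec, Matrix.smul_mulVec,
    Matrix.one_mulVec]
  simp only [Pi.sub_apply, Pi.smul_apply, smul_eq_mul]
  rw [cycMat_mulVec hd]

end cokerTwo

section cokerTwoMain
variable {d' : ℕ}

def hd1 (d' : ℕ) : 0 < d' + 1 := Nat.succ_pos d'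

noncomputable def phi1 : (Fin (d'+1) → ℤ) →ₗ[ℤ] ℤ where
  toFun v := ∑ i, v i
  map_add' v w := by simp [Finset.sum_add_distrib]
  map_smul' c v := by simp [Finset.mul_sum]

noncomputable def phi2 : (Fin (d'+1) → ℤ) →ₗ[ℤ] (Fin d' → ZMod 2) where
  toFun v := fun j => ((v j.succ : ℤ) : ZMod 2)
  map_add' v w := by funext j; simp only [Pi.add_apply]; push_cast; ring
  map_smul' c v := by
    funext j
    simp only [Pi.smul_apply, smul_eq_mul, RingHom.id_apply]
    rw [zsmul_eq_mul]
    push_cast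
    ring

noncomputable def phi : (Fin (d'+1) → ℤ) →ₗ[ℤ] ℤ × (Fin d' → ZMod 2) := LinearMap.prod phi1 phi2

lemma phi1_apply (v : Fin (d'+1) → ℤ) : phi1 v = ∑ i, v i := rfl
lemma phi2_apply (v : Fin (d'+1) → ℤ) (j : Fin d') : phi2 v j = ((v j.succ : ℤ) : ZMod 2) := rfl
lemma phi_apply (v : Fin (d'+1) → ℤ) : phi v = (phi1 v, phi2 v) := rfl

lemma cpred_zero : cpred (hd1 d') (0 : Fin (d'+1)) = ⟨d', by omega⟩ := by
  unfold cpred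
  ext
  simp only [Fin.val_zero, Nat.zero_add]
  rw [Nat.mod_eq_of_lt (by omega)]
  omega

lemma cpred_pos (i : Fin (d'+1)) (hi : 0 < (i:ℕ)) :
    cpred (hd1 d') i = ⟨(i:ℕ) - 1, by have := i.isLt; omega⟩ := by
  unfold cpred
  ext
  simp only []
  have h1 : (i:ℕ) + (d'+1) - 1 = ((i:ℕ) - 1) + (d'+1) := by omega
  rw [h1, Nat.add_mod_right, Nat.mod_eq_of_lt (by have := i.isLt; omega)]

lemma range_le_ker : LinearMap.range (aeval (cycMat (d'+1)) ((2:ℤ[X]) - 2*X)).mulVecLin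
    ≤ LinearMap.ker (phi (d' := d')) := by
  rintro x ⟨v, rfl⟩
  simp only [LinearMap.mem_ker, Matrix.mulVecLin_apply]
  have hfst : phi1 ((aeval (cycMat (d'+1)) ((2:ℤ[X]) - 2*X)).mulVec v) = 0 := by
    rw [phi1_apply]
    rw [aeval_two_sub_two_X]
    simp only [Matrix.sub_mulVec, Matrix.smul_mulVec, Matrix.one_mulVec, Pi.sub_apply,
      Pi.smul_apply, smul_eq_mul]
    rw [Finset.sum_sub_distrib, ← Finset.mul_sum, ← Finset.mul_sum, sum_cycMat_mulVec (hd1 d')]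
    ring
  have hsnd : phi2 ((aeval (cycMat (d'+1)) ((2:ℤ[X]) - 2*X)).mulVec v) = 0 := by
    funext j
    rw [phi2_apply]
    rw [M2_mulVec (hd1 d')]
    push_cast
    have h2 : ((2:ZMod 2)) = 0 := rfl
    rw [h2]
    simp
  rw [phi_apply, hfst, hsnd]
  rfl

lemma ker_le_range : LinearMap.ker (phi (d' := d'))
    ≤ LinearMap.range (aeval (cycMat (d'+1)) ((2:ℤ[X]) - 2*X)).mulVecLin := by
  intro v hv
  have hv' : phi (d' := d') v = 0 := LinearMap.mem_ker.1 hv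
  rw [phi_apply] at hv'
  have h1' : phi1 v = 0 := congrArg Prod.fst hv'
  have h1 : ∑ i, v i = 0 := by rwa [phi1_apply] at h1'
  have h2' : phi2 v = 0 := congrArg Prod.snd hv'
  have h2 : ∀ j : Fin d', ((v j.succ : ℤ) : ZMod 2) = 0 := by
    intro j
    have := congrFun h2' j
    rwa [phi2_apply] at this
  have hdvd : ∀ j : Fin d', (2:ℤ) ∣ v j.succ :=
    fun j => (ZMod.intCast_zmod_eq_zero_iff_dvd _ 2).1 (h2 j)
  set S : Fin (d'+1) → ℤ := fun i => ∑ j : Fin d', if (j:ℕ) + 1 ≤ (i:ℕ) then v j.succ else 0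
    with hS
  have hSdvd : ∀ i, (2:ℤ) ∣ S i := by
    intro i
    refine Finset.dvd_sum ?_
    intro j _
    by_cases hij : (j:ℕ) + 1 ≤ (i:ℕ)
    · simpa [hij] using hdvd j
    · simp [hij]
  set w : Fin (d'+1) → ℤ := fun i => S i / 2 with hw
  have hw2 : ∀ i, 2 * w i = S i := fun i => Int.mul_ediv_cancel' (hSdvd i)
  refine ⟨w, ?_⟩
  rw [Matrix.mulVecLin_apply]
  funext i
  rw [M2_mulVec (hd1 d'), hw2, hw2]
  rcases Nat.eq_zero_or_pos (i:ℕ) with hi | hi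
  · have hi0 : i = 0 := by ext; exact hi
    subst hi0
    rw [cpred_zero]
    have hS0 : S 0 = 0 := by
      rw [hS]
      refine Finset.sum_eq_zero ?_
      intro j _
      simp
    have hSlast : S ⟨d', by omega⟩ = ∑ j : Fin d', v j.succ := by
      rw [hS]
      refine Finset.sum_congr rfl ?_
      intro j _
      have : (j:ℕ) + 1 ≤ d' := j.isLt
      simp [this]
    have htot : v 0 + ∑ j : Fin d', v j.succ = 0 := by
      rw [← Fin.sum_univ_succ]; exact h1
    rw [hS0, hSlast]
    omega
  · rw [cpred_pos i hi]
    have hilt := i.isLt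
    have key : ∀ i' : Fin (d'+1), (i':ℕ) = (i:ℕ) - 1 → S i - S i' = v i := by
      intro i' hi'
      simp only [hS]
      rw [← Finset.sum_sub_distrib]
      have hlt : (i:ℕ) - 1 < d' := by omega
      have hv1 : ((⟨(i:ℕ) - 1, hlt⟩ : Fin d') : ℕ) = (i:ℕ) - 1 := rfl
      have hsucceq : (⟨(i:ℕ) - 1, hlt⟩ : Fin d').succ = i := by
        apply Fin.ext
        simp only [Fin.val_succ, hv1]
        omega
      rw [Finset.sum_eq_single (⟨(i:ℕ) - 1, hlt⟩ : Fin d')]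
      · rw [if_pos (by omega), if_neg (by omega), sub_zero, hsucceq]
      · intro b _ hb
        have hbv : (b:ℕ) ≠ (i:ℕ) - 1 := fun hc => hb (Fin.ext (hc.trans hv1.symm))
        have hblt := b.isLt
        by_cases hble : (b:ℕ) + 1 ≤ (i':ℕ)
        · rw [if_pos (by omega), if_pos hble, sub_self]
        · rw [if_neg (by omega), if_neg hble, sub_self]
      · intro hmem
        exact absurd (Finset.mem_univ _) hmem
    exact key _ rfl

lemma phi_surjective : Function.Surjective (phi (d' := d')) := by
  rintro ⟨a, y⟩
  set v : Fin (d'+1) → ℤ := fun i => if h : (i:ℕ) = 0 then a - ∑ j : Fin d', ((y j).val : ℤ)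
    else ((y ⟨(i:ℕ) - 1, by have := i.isLt; omega⟩).val : ℤ) with hv
  have hsucc : ∀ j : Fin d', v j.succ = ((y j).val : ℤ) := by
    intro j
    have hne : ((j.succ : Fin (d'+1)) : ℕ) ≠ 0 := by simp [Fin.val_succ]
    simp only [hv]
    rw [dif_neg hne]
    congr 2
    all_goals (apply Fin.ext; simp only [Fin.val_succ]; omega)
  have h0 : v 0 = a - ∑ j : Fin d', ((y j).val : ℤ) := by
    simp only [hv]
    rw [dif_pos (by simp)]
  refine ⟨v, ?_⟩
  rw [phi_apply]
  have e1 : phi1 v = a := by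
    rw [phi1_apply, Fin.sum_univ_succ, h0, Finset.sum_congr rfl (fun j _ => hsucc j)]
    ring
  have e2 : phi2 v = y := by
    funext j
    rw [phi2_apply, hsucc j]
    push_cast
    rw [ZMod.natCast_val, ZMod.cast_id]
  rw [e1, e2]

noncomputable def cokerTwoEquiv (d' : ℕ) :
    coker (aeval (cycMat (d'+1)) ((2:ℤ[X]) - 2*X)) ≃+ ℤ × (Fin d' → ZMod 2) := by
  have hbij : Function.Bijective
      (Submodule.liftQ _ (phi (d' := d')) range_le_ker) := by
    constructor
    · rw [← LinearMap.ker_eq_bot]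
      exact Submodule.ker_liftQ_eq_bot _ _ _ ker_le_range
    · intro x
      obtain ⟨v, hv⟩ := phi_surjective x
      exact ⟨Submodule.Quotient.mk v, hv⟩
  exact (LinearEquiv.ofBijective _ hbij).toAddEquiv

end cokerTwoMain


section caseLemmas

lemma matA_eq (k m : ℕ) : (1 - cycMat k) * (1 + cycMat k ^ m)
    = aeval (cycMat k) (((1:ℤ[X]) - X) * (1 + X^m)) := by
  rw [_root_.map_mul, map_sub, _root_.map_add, _root_.map_pow, aeval_X, _root_.map_one]

lemma cokerROddCase {k m h c : ℕ} (hk : 0 < k) (hh : 0 < h)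
    (hgcd : Nat.gcd (2*m) k = 2*h) (hmc : m = h + c * (2*h)) :
    Nonempty (coker ((1 - cycMat k) * (1 + cycMat k ^ m)) ≃+ (Fin (h+1) → ℤ)) := by
  rw [matA_eq]
  have e1 := cokerPolyEquiv hk (((1:ℤ[X]) - X) * (1 + X^m))
  have e2 := Ideal.quotEquivOfEq (spanROdd k m h c hgcd hmc)
  have e3 := quotSpanMonicEquiv (monicP h hh)
  exact ⟨(e1.trans e2.toAddEquiv).trans
    (e3.trans (piReindexAdd (finCongr (natDegreeP h hh))))⟩

lemma cokerREvenCase {k m d' : ℕ} (hk : 0 < k) (hgcd : Nat.gcd (2*m) k = d'+1)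
    (hdm : (d'+1) ∣ m) :
    Nonempty (coker ((1 - cycMat k) * (1 + cycMat k ^ m)) ≃+ (ℤ × (Fin d' → ZMod 2))) := by
  rw [matA_eq]
  have e1 := cokerPolyEquiv hk (((1:ℤ[X]) - X) * (1 + X^m))
  have e2 := Ideal.quotEquivOfEq (spanREven k m (d'+1) hgcd hdm)
  have e3 := (cokerPolyEquiv (Nat.succ_pos d') ((2:ℤ[X]) - 2*X)).symm
  exact ⟨((e1.trans e2.toAddEquiv).trans e3).trans (cokerTwoEquiv d')⟩

end caseLemmas

section helpers
variable {M : Type*} [AddCommMonoid M]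

def sumArrowAdd {α β : Type*} : ((α ⊕ β) → M) ≃+ ((α → M) × (β → M)) :=
  { Equiv.sumArrowEquivProdArrow α β M with map_add' := fun f g => rfl }

def curryAdd {α β : Type*} : ((α × β) → M) ≃+ (α → β → M) :=
  { Equiv.curry α β M with map_add' := fun f g => rfl }

def pi1Add : M ≃+ (Fin 1 → M) :=
  { (Equiv.funUnique (Fin 1) M).symm with map_add' := fun f g => rfl }

/-- (Fin s → Fin d → M) ≃+ (Fin (s*d) → M) -/
def piPiAdd (s d : ℕ) : (Fin s → Fin d → M) ≃+ (Fin (s*d) → M) :=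
  (curryAdd.symm.trans (piReindexAdd finProdFinEquiv))

/-- (Fin a → M) × (Fin b → M) ≃+ (Fin (a+b) → M) -/
def prodPiAdd (a b : ℕ) : ((Fin a → M) × (Fin b → M)) ≃+ (Fin (a+b) → M) :=
  (sumArrowAdd.symm.trans (piReindexAdd finSumFinEquiv))

end helpers

theorem stmt_19 (n k : ℕ) (hn : 2 ≤ n) (hk : 1 ≤ k) (d r : ℕ)
    (hd : d = Nat.gcd (n + 1) k) (hr : r = (n + 1) / d) :
    (Odd n → Even r → Nonempty (
      (((Fin ((n - 3) / 2) → coker (1 - cycMat k ^ (n + 1))) ×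
        coker ((1 - cycMat k) * (1 + cycMat k ^ ((n + 1) / 2)))) ≃+
      ((Fin ((n * d - 3 * d + 2) / 2) → ℤ) × (Fin (d - 1) → ZMod 2))))) ∧
    (Odd n → Odd r → Nonempty (
      (((Fin ((n - 3) / 2) → coker (1 - cycMat k ^ (n + 1))) ×
        coker ((1 - cycMat k) * (1 + cycMat k ^ ((n + 1) / 2)))) ≃+
      (Fin ((n * d - 2 * d + 2) / 2) → ℤ)))) ∧
    (Even n → Nonempty (
      (((Fin ((n - 2) / 2) → coker (1 - cycMat k ^ (n + 1))) ×
        coker (1 - cycMat k)) ≃+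
      (Fin ((n * d - 2 * d + 2) / 2) → ℤ)))) := by
  have hk0 : 0 < k := hk
  have hd0 : 0 < d := by
    rw [hd]; exact Nat.gcd_pos_of_pos_left k (by omega)
  have hd_dvd : d ∣ n + 1 := by rw [hd]; exact Nat.gcd_dvd_left _ _
  have hrd : n + 1 = r * d := by
    rw [hr, Nat.div_mul_cancel hd_dvd]
  -- first factor
  obtain ⟨E1⟩ := cokerA (k := k) (n+1) hk0 (by omega)
  have E1' : coker (1 - cycMat k ^ (n+1)) ≃+ (Fin d → ℤ) :=
    E1.trans (piReindexAdd (finCongr (by rw [hd])))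
  refine ⟨?_, ?_, ?_⟩
  · -- n odd, r even
    intro hodd hreven
    obtain ⟨a, ha⟩ := hodd
    have ha1 : 1 ≤ a := by omega
    obtain ⟨t, ht⟩ := hreven
    -- m = (n+1)/2
    set m := (n+1)/2 with hm
    have hm2 : 2 * m = n + 1 := by omega
    have hdm : d ∣ m := by
      refine ⟨t, ?_⟩
      have h2td : n + 1 = 2 * (d * t) := by rw [hrd, ht]; ring
      omega
    obtain ⟨d', hd'⟩ : ∃ d', d = d' + 1 := ⟨d - 1, by omega⟩
    obtain ⟨E2⟩ := cokerREvenCase (k := k) (m := m) (d' := d') hk0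
      (by rw [hm2, ← hd', ← hd]) (by rw [← hd']; exact hdm)
    -- combine
    have key : (n-3)/2 * d + 1 = (n*d - 3*d + 2)/2 := by
      have hs : (n-3)/2 = a - 1 := by omega
      have h1 : n*d - 3*d = (n-3)*d := by rw [Nat.sub_mul]
      have h2 : (n-3)*d = 2*((a-1)*d) := by
        rw [show n - 3 = 2*(a-1) by omega]; ring
      rw [hs, h1, h2]
      generalize (a-1)*d = X
      omega
    set s := (n-3)/2 with hsdef
    have C1 : ((Fin s → coker (1 - cycMat k ^ (n+1))) ×
        coker ((1 - cycMat k) * (1 + cycMat k ^ m)))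
        ≃+ ((Fin (s*d) → ℤ) × (ℤ × (Fin d' → ZMod 2))) :=
      AddEquiv.prodCongr ((AddEquiv.piCongrRight (fun _ => E1')).trans (piPiAdd s d)) E2
    have C2 : ((Fin (s*d) → ℤ) × (ℤ × (Fin d' → ZMod 2)))
        ≃+ (((Fin (s*d) → ℤ) × (Fin 1 → ℤ)) × (Fin d' → ZMod 2)) :=
      (AddEquiv.prodCongr (AddEquiv.refl _) (AddEquiv.prodCongr pi1Add (AddEquiv.refl _))).trans
        AddEquiv.prodAssoc.symm
    have C3 : (((Fin (s*d) → ℤ) × (Fin 1 → ℤ)) × (Fin d' → ZMod 2))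
        ≃+ ((Fin ((n*d - 3*d + 2)/2) → ℤ) × (Fin d' → ZMod 2)) :=
      AddEquiv.prodCongr ((prodPiAdd (s*d) 1).trans (piReindexAdd (finCongr key))) (AddEquiv.refl _)
    have hfin : d - 1 = d' := by omega
    rw [hfin]
    exact ⟨(C1.trans C2).trans C3⟩
  · -- n odd, r odd
    intro hodd hrodd
    obtain ⟨a, ha⟩ := hodd
    have ha1 : 1 ≤ a := by omega
    obtain ⟨c, hc⟩ := hrodd
    have hdeven : 2 ∣ d := by
      rcases Nat.even_or_odd d with he | ho
      · obtain ⟨x, hx⟩ := he; exact ⟨x, by omega⟩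
      · exfalso
        have hodd_rd : Odd (r * d) := Odd.mul ⟨c, by omega⟩ ho
        rw [← hrd] at hodd_rd
        obtain ⟨y, hy⟩ := hodd_rd
        omega
    obtain ⟨h, hdh⟩ := hdeven
    have hh1 : 0 < h := by omega
    set m := (n+1)/2 with hm
    have hm2 : 2*m = n + 1 := by omega
    have hmc : m = h + c * (2*h) := by
      have hx : n + 1 = 2*(h + c*(2*h)) := by rw [hrd, hc, hdh]; ring
      omega
    obtain ⟨E2⟩ := cokerROddCase (k := k) (m := m) (h := h) (c := c) hk0 hh1
      (by rw [hm2, ← hdh, ← hd]) hmc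
    set s := (n-3)/2 with hsdef
    have key : s*d + (h+1) = (n*d - 2*d + 2)/2 := by
      have hs : s = a - 1 := by omega
      have h1 : n*d - 2*d = (n-2)*d := by rw [Nat.sub_mul]
      have h2 : (n-2)*d = 2*((2*a-1)*h) := by
        rw [show n-2 = 2*a-1 by omega, hdh, show (2*a-1)*(2*h) = 2*((2*a-1)*h) from by ring]
      have h3 : s*d = 2*((a-1)*h) := by
        rw [hs, hdh, show (a-1)*(2*h) = 2*((a-1)*h) from by ring]
      have h4 : (2*a-1)*h = 2*((a-1)*h) + h := by
        rw [show 2*a-1 = 2*(a-1)+1 by omega]; ring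
      rw [h1, h2, h3, h4]
      generalize (a-1)*h = X
      omega
    have C1 : ((Fin s → coker (1 - cycMat k ^ (n+1))) ×
        coker ((1 - cycMat k) * (1 + cycMat k ^ m)))
        ≃+ ((Fin (s*d) → ℤ) × (Fin (h+1) → ℤ)) :=
      AddEquiv.prodCongr ((AddEquiv.piCongrRight (fun _ => E1')).trans (piPiAdd s d)) E2
    exact ⟨(C1.trans (prodPiAdd (s*d) (h+1))).trans (piReindexAdd (finCongr key))⟩
  · -- n even
    intro heven
    obtain ⟨a, ha⟩ := heven
    have ha1 : 1 ≤ a := by omega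
    obtain ⟨E2⟩ := cokerA (k := k) 1 hk0 (by omega)
    have E2' : coker (1 - cycMat k) ≃+ (Fin 1 → ℤ) := by
      rw [show (1 - cycMat k : Matrix (Fin k) (Fin k) ℤ) = 1 - cycMat k ^ 1 by rw [pow_one]]
      exact E2.trans (piReindexAdd (finCongr (Nat.gcd_one_left k)))
    have key : (n-2)/2 * d + 1 = (n*d - 2*d + 2)/2 := by
      have hs : (n-2)/2 = a - 1 := by omega
      have h1 : n*d - 2*d = (n-2)*d := by rw [Nat.sub_mul]
      have h2 : (n-2)*d = 2*((a-1)*d) := by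
        rw [show n - 2 = 2*(a-1) by omega]; ring
      rw [hs, h1, h2]
      generalize (a-1)*d = X
      omega
    set s := (n-2)/2 with hsdef
    have C1 : ((Fin s → coker (1 - cycMat k ^ (n+1))) × coker (1 - cycMat k))
        ≃+ ((Fin (s*d) → ℤ) × (Fin 1 → ℤ)) :=
      AddEquiv.prodCongr ((AddEquiv.piCongrRight (fun _ => E1')).trans (piPiAdd s d)) E2'
    exact ⟨(C1.trans (prodPiAdd (s*d) 1)).trans (piReindexAdd (finCongr key))⟩
end
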